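/- arXiv:1101.5982 — 5 statements merged into one kernel-verified Lean document; each statement's English description precedes it below -/
import Mathlib

section
/- Let T be a Tambara functor on a finite group G and a ∈ T(A) for a finite G-set A. Then the principal ideal ⟨a⟩ satisfies, for every finite G-set X: ⟨a⟩(X) = { u_+(c · v_! w*(a)) : X ←u− C ←v− D −w→ A are G-maps, c ∈ T(C) }. -/
set_option autoImplicit false

/-! Finite G-sets -/

structure GSet (G : Type) [Group G] : Type 1 where
  carrier : Type
  [mulAction : MulAction G carrier]
  [finite : Finite carrier]

attribute [instance] GSet.mulAction GSet.finite

/-- Equivariant maps of finite `G`-sets. -/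
structure GSetHom {G : Type} [Group G] (X Y : GSet G) : Type where
  toFun : X.carrier → Y.carrier
  map_smul : ∀ (g : G) (x : X.carrier), toFun (g • x) = g • toFun x

namespace GSetHom

variable {G : Type} [Group G]

def id (X : GSet G) : GSetHom X X := ⟨fun x => x, fun _ _ => rfl⟩

def comp {X Y Z : GSet G} (g : GSetHom Y Z) (f : GSetHom X Y) : GSetHom X Z :=
  ⟨fun x => g.toFun (f.toFun x), fun a x => by
    show g.toFun (f.toFun (a • x)) = a • g.toFun (f.toFun x)
    rw [f.map_smul, g.map_smul]⟩

end GSetHom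

namespace GSet

variable {G : Type} [Group G]

/-- Binary disjoint union of `G`-sets. -/
def sum (X Y : GSet G) : GSet G where
  carrier := X.carrier ⊕ Y.carrier

def inl (X Y : GSet G) : GSetHom X (X.sum Y) := ⟨Sum.inl, fun _ _ => rfl⟩

def inr (X Y : GSet G) : GSetHom Y (X.sum Y) := ⟨Sum.inr, fun _ _ => rfl⟩

instance : MulAction G Empty where
  smul _ x := x.elim
  one_smul x := x.elim
  mul_smul _ _ x := x.elim

/-- The empty `G`-set. -/
def empty (G : Type) [Group G] : GSet G where
  carrier := Empty

/-- Finite disjoint unions of `G`-sets. -/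
def sigma {n : ℕ} (Xs : Fin n → GSet G) : GSet G where
  carrier := Σ i, (Xs i).carrier

def sigmaIncl {n : ℕ} (Xs : Fin n → GSet G) (i : Fin n) : GSetHom (Xs i) (sigma Xs) :=
  ⟨fun x => ⟨i, x⟩, fun _ _ => rfl⟩

/-- The canonical pullback of two `G`-maps. -/
def pullback {X Y Z : GSet G} (f : GSetHom X Z) (g : GSetHom Y Z) : GSet G where
  carrier := { q : X.carrier × Y.carrier // f.toFun q.1 = g.toFun q.2 }
  mulAction :=
  { smul := fun a q => ⟨a • q.val, by
      show f.toFun (a • q.val.1) = g.toFun (a • q.val.2)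
      rw [f.map_smul, g.map_smul, q.property]⟩
    one_smul := fun q => Subtype.ext (one_smul G q.val)
    mul_smul := fun a b q => Subtype.ext (mul_smul a b q.val) }

def pbFst {X Y Z : GSet G} (f : GSetHom X Z) (g : GSetHom Y Z) :
    GSetHom (pullback f g) X := ⟨fun q => q.val.1, fun _ _ => rfl⟩

def pbSnd {X Y Z : GSet G} (f : GSetHom X Z) (g : GSetHom Y Z) :
    GSetHom (pullback f g) Y := ⟨fun q => q.val.2, fun _ _ => rfl⟩

/-- The complement of the image of a `G`-map, as a `G`-set. -/
def compl {X Y : GSet G} (f : GSetHom X Y) : GSet G where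
  carrier := { y : Y.carrier // ∀ x, f.toFun x ≠ y }
  mulAction :=
  { smul := fun g y => ⟨g • y.val, fun x h => y.property (g⁻¹ • x) (by
      rw [f.map_smul, h, inv_smul_smul])⟩
    one_smul := fun y => Subtype.ext (one_smul G y.val)
    mul_smul := fun a b y => Subtype.ext (mul_smul a b y.val) }

def complIncl {X Y : GSet G} (f : GSetHom X Y) : GSetHom (compl f) Y :=
  ⟨fun y => y.val, fun _ _ => rfl⟩

/-- Points of Tambara's dependent product `Π_f(A)`: pairs `(y, σ)` of a point `y : Y`
and a section `σ` of `p` on the fiber `f⁻¹(y)` (encoded as an `Option`-valued function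
supported exactly on the fiber). -/
def PiProp {X Y A : GSet G} (f : GSetHom X Y) (p : GSetHom A X)
    (s : Y.carrier × (X.carrier → Option A.carrier)) : Prop :=
  (∀ x, (s.2 x).isSome = true ↔ f.toFun x = s.1) ∧
  (∀ x a, s.2 x = some a → p.toFun a = x)

def PiCar {X Y A : GSet G} (f : GSetHom X Y) (p : GSetHom A X) : Type :=
  { s : Y.carrier × (X.carrier → Option A.carrier) // PiProp f p s }

instance optionFinite {α : Type} [Finite α] : Finite (Option α) :=
  Finite.of_equiv _ (Equiv.optionEquivSumPUnit.{0,0} α).symm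

instance piFinite {X Y A : GSet G} (f : GSetHom X Y) (p : GSetHom A X) :
    Finite (PiCar f p) := by
  unfold PiCar; infer_instance

def piSmul {X Y A : GSet G} (f : GSetHom X Y) (p : GSetHom A X) (g : G)
    (s : PiCar f p) : PiCar f p :=
  ⟨(g • s.val.1, fun x => (s.val.2 (g⁻¹ • x)).map (g • ·)), by
    constructor
    · intro x
      rw [Option.isSome_map, s.property.1 (g⁻¹ • x), f.map_smul]
      constructor
      · intro h; rw [← h, smul_inv_smul]
      · intro h; rw [h, inv_smul_smul]
    · intro x a ha
      rcases Option.map_eq_some_iff.mp ha with ⟨b, hb, rfl⟩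
      rw [p.map_smul, s.property.2 _ _ hb, smul_inv_smul]⟩

instance piAction {X Y A : GSet G} (f : GSetHom X Y) (p : GSetHom A X) :
    MulAction G (PiCar f p) where
  smul := piSmul f p
  one_smul s := by
    apply Subtype.ext
    refine Prod.ext (one_smul G s.val.1) ?_
    funext x
    show (s.val.2 ((1:G)⁻¹ • x)).map ((1:G) • ·) = s.val.2 x
    rw [inv_one, one_smul]
    cases h : s.val.2 x <;> simp [one_smul]
  mul_smul a b s := by
    apply Subtype.ext
    refine Prod.ext (mul_smul a b s.val.1) ?_
    funext x
    show (s.val.2 ((a * b)⁻¹ • x)).map ((a * b) • ·)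
        = ((s.val.2 (b⁻¹ • (a⁻¹ • x))).map (b • ·)).map (a • ·)
    rw [Option.map_map, mul_inv_rev, mul_smul]
    cases h : s.val.2 (b⁻¹ • a⁻¹ • x) <;> simp [mul_smul, Function.comp]

/-- Tambara's dependent product `Π_f(A)` as a `G`-set. -/
def piObj {X Y A : GSet G} (f : GSetHom X Y) (p : GSetHom A X) : GSet G where
  carrier := PiCar f p

/-- The projection `π : Π_f(A) → Y`. -/
def piPr {X Y A : GSet G} (f : GSetHom X Y) (p : GSetHom A X) :
    GSetHom (piObj f p) Y := ⟨fun s => s.val.1, fun _ _ => rfl⟩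

theorem optGet {α : Type} {o : Option α} {a : α} (h : o = some a) :
    ∀ hs : o.isSome = true, o.get hs = a := by subst h; intro _; rfl

/-- The evaluation map `λ : X ×_Y Π_f(A) → A`, `(x, (y, σ)) ↦ σ(x)`. -/
def piEval {X Y A : GSet G} (f : GSetHom X Y) (p : GSetHom A X) :
    GSetHom (pullback f (piPr f p)) A where
  toFun z := (z.val.2.val.2 z.val.1).get (by
    rw [z.val.2.property.1 z.val.1]; exact z.property)
  map_smul g z := by
    have hs : (z.val.2.val.2 z.val.1).isSome = true := by
      rw [z.val.2.property.1 z.val.1]; exact z.property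
    obtain ⟨a, ha⟩ := Option.isSome_iff_exists.mp hs
    have h1 : z.val.2.val.2 z.val.1 = some a := ha
    have h2 : (g • z).val.2.val.2 (g • z).val.1 = some (g • a) := by
      show (z.val.2.val.2 (g⁻¹ • (g • z.val.1))).map (g • ·) = some (g • a)
      rw [inv_smul_smul, h1]; rfl
    simp only [optGet h2, optGet h1]

end GSet

namespace GSet

/-- A transitive (nonempty) finite `G`-set. -/
def IsTransitive {G : Type} [Group G] (X : GSet G) : Prop :=
  Nonempty X.carrier ∧ MulAction.IsPretransitive G X.carrier

end GSet

/-! Tambara functors -/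

/-- The underlying system of commutative rings of a Tambara functor. -/
structure TamData (G : Type) [Group G] : Type 1 where
  obj : GSet G → Type
  ring : ∀ X, CommRing (obj X)

attribute [instance] TamData.ring

/-- A Tambara functor on the finite group `G`: a system of commutative rings `obj X`
indexed by finite `G`-sets, together with restrictions `res`, additive transfers `tr`
and multiplicative transfers `nm`, functorial, additive, satisfying the Mackey
base-change conditions, the projection formula, and Tambara's distributive law. -/
structure TambaraFunctor (G : Type) [Group G] extends TamData G where
  res : ∀ {X Y : GSet G}, GSetHom X Y → (obj Y →+* obj X)
  tr : ∀ {X Y : GSet G}, GSetHom X Y → (obj X →+ obj Y)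
  nm : ∀ {X Y : GSet G}, GSetHom X Y → (obj X →* obj Y)
  res_id : ∀ {X : GSet G} (x : obj X), res (GSetHom.id X) x = x
  res_comp : ∀ {X Y Z : GSet G} (f : GSetHom X Y) (g : GSetHom Y Z) (z : obj Z),
    res f (res g z) = res (g.comp f) z
  tr_id : ∀ {X : GSet G} (x : obj X), tr (GSetHom.id X) x = x
  tr_comp : ∀ {X Y Z : GSet G} (f : GSetHom X Y) (g : GSetHom Y Z) (x : obj X),
    tr g (tr f x) = tr (g.comp f) x
  nm_id : ∀ {X : GSet G} (x : obj X), nm (GSetHom.id X) x = x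
  nm_comp : ∀ {X Y Z : GSet G} (f : GSetHom X Y) (g : GSetHom Y Z) (x : obj X),
    nm g (nm f x) = nm (g.comp f) x
  /-- additivity on binary disjoint unions -/
  add_bij : ∀ X Y : GSet G, Function.Bijective
    (fun t : obj (X.sum Y) => (res (GSet.inl X Y) t, res (GSet.inr X Y) t))
  /-- `T(∅)` is the zero ring -/
  empty_subsingleton : ∀ x y : obj (GSet.empty G), x = y
  /-- Mackey base change for the additive transfer -/
  tr_bc : ∀ {X Y Z : GSet G} (f : GSetHom X Z) (g : GSetHom Y Z) (x : obj X),
    res g (tr f x) = tr (GSet.pbSnd f g) (res (GSet.pbFst f g) x)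
  /-- Mackey base change for the multiplicative transfer -/
  nm_bc : ∀ {X Y Z : GSet G} (f : GSetHom X Z) (g : GSetHom Y Z) (x : obj X),
    res g (nm f x) = nm (GSet.pbSnd f g) (res (GSet.pbFst f g) x)
  /-- the projection formula -/
  proj_formula : ∀ {X Y : GSet G} (f : GSetHom X Y) (a : obj X) (b : obj Y),
    tr f (a * res f b) = tr f a * b
  /-- the norm of zero is the additive transfer of `1` from the complement of the image -/
  nm_zero : ∀ {X Y : GSet G} (f : GSetHom X Y), nm f (0 : obj X) = tr (GSet.complIncl f) 1
  /-- Tambara's distributive law, via the canonical exponential diagram on `Π_f(A)` -/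
  distrib : ∀ {X Y A : GSet G} (f : GSetHom X Y) (p : GSetHom A X) (a : obj A),
    nm f (tr p a) = tr (GSet.piPr f p)
      (nm (GSet.pbSnd f (GSet.piPr f p)) (res (GSet.piEval f p) a))

namespace TambaraFunctor

variable {G : Type} [Group G]

/-- `f_!(x) = f_•(x) - f_•(0)`. -/
def shriek (T : TambaraFunctor G) {X Y : GSet G} (f : GSetHom X Y) (x : T.obj X) :
    T.obj Y := T.nm f x - T.nm f 0

end TambaraFunctor

/-- A morphism of Tambara functors: a family of ring homomorphisms natural with respect
to restrictions, additive transfers and multiplicative transfers. -/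
structure TamHom {G : Type} [Group G] (T S : TambaraFunctor G) where
  app : ∀ X : GSet G, T.obj X →+* S.obj X
  app_res : ∀ {X Y : GSet G} (f : GSetHom X Y) (y : T.obj Y),
    app X (T.res f y) = S.res f (app Y y)
  app_tr : ∀ {X Y : GSet G} (f : GSetHom X Y) (x : T.obj X),
    app Y (T.tr f x) = S.tr f (app X x)
  app_nm : ∀ {X Y : GSet G} (f : GSetHom X Y) (x : T.obj X),
    app Y (T.nm f x) = S.nm f (app X x)

namespace TambaraFunctor

variable {G : Type} [Group G]

/-- An ideal of a Tambara functor: a family of ideals closed under restrictions,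
additive transfers, and satisfying `f_•(𝔦(X)) ⊆ f_•(0) + 𝔦(Y)`
(equivalently, closed under `f_!`). -/
structure IsIdeal (T : TambaraFunctor G) (I : ∀ X : GSet G, Ideal (T.obj X)) : Prop where
  res_mem : ∀ {X Y : GSet G} (f : GSetHom X Y) {y : T.obj Y}, y ∈ I Y → T.res f y ∈ I X
  tr_mem : ∀ {X Y : GSet G} (f : GSetHom X Y) {x : T.obj X}, x ∈ I X → T.tr f x ∈ I Y
  shriek_mem : ∀ {X Y : GSet G} (f : GSetHom X Y) {x : T.obj X},
    x ∈ I X → T.shriek f x ∈ I Y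

/-- The ideal generated by a family of subsets: the intersection of all ideals
containing it. -/
def gen (T : TambaraFunctor G) (S : ∀ X : GSet G, Set (T.obj X)) (X : GSet G) :
    Ideal (T.obj X) :=
  ⨅ (I : ∀ Y : GSet G, Ideal (T.obj Y)) (_ : T.IsIdeal I) (_ : ∀ Y, S Y ⊆ ↑(I Y)), I X

/-- The family of subsets consisting of the single element `a ∈ T(A)`. -/
def single (T : TambaraFunctor G) (A : GSet G) (a : T.obj A) (X : GSet G) :
    Set (T.obj X) := { x | ∃ h : A = X, h ▸ a = x }

/-- The principal ideal `⟨a⟩` generated by `a ∈ T(A)`. -/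
def principal (T : TambaraFunctor G) (A : GSet G) (a : T.obj A) :
    ∀ X : GSet G, Ideal (T.obj X) := T.gen (T.single A a)

/-- The defining set of the product of two ideals. -/
def mulSet (T : TambaraFunctor G) (I J : ∀ X : GSet G, Ideal (T.obj X)) (X : GSet G) :
    Set (T.obj X) :=
  { x | ∃ (A : GSet G) (p : GSetHom A X) (a b : T.obj A),
      a ∈ I A ∧ b ∈ J A ∧ x = T.tr p (a * b) }

/-- The product of two ideals of a Tambara functor. -/
def mulIdl (T : TambaraFunctor G) (I J : ∀ X : GSet G, Ideal (T.obj X)) (X : GSet G) :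
    Ideal (T.obj X) := Ideal.span (T.mulSet I J X)

/-- Iterated products of ideals. -/
def mulMulti (T : TambaraFunctor G) :
    List (∀ X : GSet G, Ideal (T.obj X)) → ∀ X : GSet G, Ideal (T.obj X)
  | [] => fun _ => ⊤
  | I :: ls => T.mulIdl I (T.mulMulti ls)

/-- A prime ideal of a Tambara functor. -/
structure IsPrime (T : TambaraFunctor G) (P : ∀ X : GSet G, Ideal (T.obj X)) : Prop where
  isIdeal : T.IsIdeal P
  ne_top : ∃ X : GSet G, P X ≠ ⊤
  mem_or_mem : ∀ {X Y : GSet G}, X.IsTransitive → Y.IsTransitive →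
    ∀ {a : T.obj X} {b : T.obj Y},
      (∀ Z : GSet G, T.mulIdl (T.principal X a) (T.principal Y b) Z ≤ P Z) →
      a ∈ P X ∨ b ∈ P Y

/-- A maximal ideal of a Tambara functor. -/
structure IsMaximal (T : TambaraFunctor G) (M : ∀ X : GSet G, Ideal (T.obj X)) : Prop where
  isIdeal : T.IsIdeal M
  ne_top : ∃ X : GSet G, M X ≠ ⊤
  eq_of_le : ∀ K : ∀ X : GSet G, Ideal (T.obj X), T.IsIdeal K →
    (∀ X, M X ≤ K X) → (K = M ∨ ∀ X, K X = ⊤)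

end TambaraFunctor

namespace GSet

/-- The `G`-set `G/e`, i.e. `G` with the left regular action. -/
def regular (G : Type) [Group G] [Finite G] : GSet G where
  carrier := G

/-- Right multiplication `G/e → G/e`, an equivariant map. -/
def rightMul {G : Type} [Group G] [Finite G] (g : G) :
    GSetHom (regular G) (regular G) :=
  ⟨fun x => (id x : G) * g, fun a x => mul_assoc a x g⟩

end GSet

/-! ### Auxiliary infrastructure for the proof -/

namespace NPI

open GSet

variable {G : Type} [Group G]

theorem GSetHom.ext' {X Y : GSet G} {f g : GSetHom X Y} (h : f.toFun = g.toFun) : f = g := by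
  cases f; cases g; simpa using h

/-- A strict isomorphism of `G`-sets. -/
structure StrIso (X Y : GSet G) where
  hom : GSetHom X Y
  inv : GSetHom Y X
  left : hom.comp inv = GSetHom.id Y
  right : inv.comp hom = GSetHom.id X

theorem StrIso.inv_hom_apply {X Y : GSet G} (j : StrIso X Y) (x : X.carrier) :
    j.inv.toFun (j.hom.toFun x) = x :=
  congrFun (congrArg GSetHom.toFun j.right) x

theorem StrIso.hom_inj {X Y : GSet G} (j : StrIso X Y) : Function.Injective j.hom.toFun := by
  intro x y h
  rw [← j.inv_hom_apply x, ← j.inv_hom_apply y, h]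

/-- Generic pullback-style `G`-set built from a predicate. -/
def pbOf (X Y : GSet G) (p : X.carrier × Y.carrier → Prop)
    (hp : ∀ (a : G) (q : X.carrier × Y.carrier), p q → p (a • q)) : GSet G where
  carrier := { q : X.carrier × Y.carrier // p q }
  mulAction :=
  { smul := fun a q => ⟨a • q.val, hp a q.val q.property⟩
    one_smul := fun q => Subtype.ext (one_smul G q.val)
    mul_smul := fun a b q => Subtype.ext (mul_smul a b q.val) }

def fstOf (X Y : GSet G) (p : X.carrier × Y.carrier → Prop)
    (hp : ∀ (a : G) (q : X.carrier × Y.carrier), p q → p (a • q)) :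
    GSetHom (pbOf X Y p hp) X := ⟨fun q => q.val.1, fun _ _ => rfl⟩

def sndOf (X Y : GSet G) (p : X.carrier × Y.carrier → Prop)
    (hp : ∀ (a : G) (q : X.carrier × Y.carrier), p q → p (a • q)) :
    GSetHom (pbOf X Y p hp) Y := ⟨fun q => q.val.2, fun _ _ => rfl⟩

theorem pb_pred_smul {X Y Z : GSet G} (f : GSetHom X Z) (g : GSetHom Y Z) :
    ∀ (a : G) (q : X.carrier × Y.carrier),
      (f.toFun q.1 = g.toFun q.2) → f.toFun (a • q).1 = g.toFun (a • q).2 := by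
  intro a q h
  show f.toFun (a • q.1) = g.toFun (a • q.2)
  rw [f.map_smul, g.map_smul, h]

theorem pullback_eq_pbOf {X Y Z : GSet G} (f : GSetHom X Z) (g : GSetHom Y Z) :
    GSet.pullback f g
      = pbOf X Y (fun q => f.toFun q.1 = g.toFun q.2) (pb_pred_smul f g) := rfl

theorem pbOf_congr {X Y : GSet G} {p₁ p₂ : X.carrier × Y.carrier → Prop} (h : p₁ = p₂)
    (h₁ : ∀ (a : G) (q : X.carrier × Y.carrier), p₁ q → p₁ (a • q))
    (h₂ : ∀ (a : G) (q : X.carrier × Y.carrier), p₂ q → p₂ (a • q)) :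
    pbOf X Y p₁ h₁ = pbOf X Y p₂ h₂
      ∧ HEq (fstOf X Y p₁ h₁) (fstOf X Y p₂ h₂) ∧ HEq (sndOf X Y p₁ h₁) (sndOf X Y p₂ h₂) := by
  subst h
  exact ⟨rfl, HEq.rfl, HEq.rfl⟩

variable {G : Type} [Group G]

theorem tr_res_transport (T : TambaraFunctor G) {Q W P₁ P₂ : GSet G} (hP : P₁ = P₂)
    {t₁ : GSetHom P₁ W} {t₂ : GSetHom P₂ W} {s₁ : GSetHom P₁ Q} {s₂ : GSetHom P₂ Q}
    (ht : HEq t₁ t₂) (hs : HEq s₁ s₂) (x : T.obj W) :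
    T.tr s₁ (T.res t₁ x) = T.tr s₂ (T.res t₂ x) := by
  subst hP; cases ht; cases hs; rfl

theorem nm_res_transport (T : TambaraFunctor G) {Q W P₁ P₂ : GSet G} (hP : P₁ = P₂)
    {t₁ : GSetHom P₁ W} {t₂ : GSetHom P₂ W} {s₁ : GSetHom P₁ Q} {s₂ : GSetHom P₂ Q}
    (ht : HEq t₁ t₂) (hs : HEq s₁ s₂) (x : T.obj W) :
    T.nm s₁ (T.res t₁ x) = T.nm s₂ (T.res t₂ x) := by
  subst hP; cases ht; cases hs; rfl

theorem tr_res_pb_congr (T : TambaraFunctor G) {X Y Z₁ Z₂ : GSet G}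
    (f₁ : GSetHom X Z₁) (g₁ : GSetHom Y Z₁) (f₂ : GSetHom X Z₂) (g₂ : GSetHom Y Z₂)
    (h : ∀ x y, (f₁.toFun x = g₁.toFun y) ↔ (f₂.toFun x = g₂.toFun y)) (x : T.obj X) :
    T.tr (GSet.pbSnd f₁ g₁) (T.res (GSet.pbFst f₁ g₁) x)
      = T.tr (GSet.pbSnd f₂ g₂) (T.res (GSet.pbFst f₂ g₂) x) := by
  have hp : (fun q : X.carrier × Y.carrier => f₁.toFun q.1 = g₁.toFun q.2)
      = (fun q => f₂.toFun q.1 = g₂.toFun q.2) := funext fun q => propext (h q.1 q.2)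
  obtain ⟨hP, hF, hS⟩ := pbOf_congr hp (pb_pred_smul f₁ g₁) (pb_pred_smul f₂ g₂)
  show T.tr (sndOf X Y _ (pb_pred_smul f₁ g₁)) (T.res (fstOf X Y _ (pb_pred_smul f₁ g₁)) x)
      = T.tr (sndOf X Y _ (pb_pred_smul f₂ g₂)) (T.res (fstOf X Y _ (pb_pred_smul f₂ g₂)) x)
  exact tr_res_transport T hP hF hS x

theorem nm_res_pb_congr (T : TambaraFunctor G) {X Y Z₁ Z₂ : GSet G}
    (f₁ : GSetHom X Z₁) (g₁ : GSetHom Y Z₁) (f₂ : GSetHom X Z₂) (g₂ : GSetHom Y Z₂)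
    (h : ∀ x y, (f₁.toFun x = g₁.toFun y) ↔ (f₂.toFun x = g₂.toFun y)) (x : T.obj X) :
    T.nm (GSet.pbSnd f₁ g₁) (T.res (GSet.pbFst f₁ g₁) x)
      = T.nm (GSet.pbSnd f₂ g₂) (T.res (GSet.pbFst f₂ g₂) x) := by
  have hp : (fun q : X.carrier × Y.carrier => f₁.toFun q.1 = g₁.toFun q.2)
      = (fun q => f₂.toFun q.1 = g₂.toFun q.2) := funext fun q => propext (h q.1 q.2)
  obtain ⟨hP, hF, hS⟩ := pbOf_congr hp (pb_pred_smul f₁ g₁) (pb_pred_smul f₂ g₂)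
  show T.nm (sndOf X Y _ (pb_pred_smul f₁ g₁)) (T.res (fstOf X Y _ (pb_pred_smul f₁ g₁)) x)
      = T.nm (sndOf X Y _ (pb_pred_smul f₂ g₂)) (T.res (fstOf X Y _ (pb_pred_smul f₂ g₂)) x)
  exact nm_res_transport T hP hF hS x

theorem tr_diag (T : TambaraFunctor G) {Q : GSet G} (y : T.obj Q) :
    T.tr (GSet.pbSnd (GSetHom.id Q) (GSetHom.id Q))
      (T.res (GSet.pbFst (GSetHom.id Q) (GSetHom.id Q)) y) = y := by
  have h := T.tr_bc (GSetHom.id Q) (GSetHom.id Q) y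
  rw [T.tr_id, T.res_id] at h
  exact h.symm

theorem nm_diag (T : TambaraFunctor G) {Q : GSet G} (y : T.obj Q) :
    T.nm (GSet.pbSnd (GSetHom.id Q) (GSetHom.id Q))
      (T.res (GSet.pbFst (GSetHom.id Q) (GSetHom.id Q)) y) = y := by
  have h := T.nm_bc (GSetHom.id Q) (GSetHom.id Q) y
  rw [T.nm_id, T.res_id] at h
  exact h.symm

theorem res_tr_self_of_inj (T : TambaraFunctor G) {D C : GSet G} (i : GSetHom D C)
    (hi : Function.Injective i.toFun) (y : T.obj D) :
    T.res i (T.tr i y) = y := by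
  rw [T.tr_bc i i y,
    tr_res_pb_congr T i i (GSetHom.id D) (GSetHom.id D)
      (fun x y => ⟨fun h => hi h, fun h => by exact congrArg i.toFun h⟩) y,
    tr_diag]

theorem res_nm_self_of_inj (T : TambaraFunctor G) {D C : GSet G} (i : GSetHom D C)
    (hi : Function.Injective i.toFun) (y : T.obj D) :
    T.res i (T.nm i y) = y := by
  rw [T.nm_bc i i y,
    nm_res_pb_congr T i i (GSetHom.id D) (GSetHom.id D)
      (fun x y => ⟨fun h => hi h, fun h => by exact congrArg i.toFun h⟩) y,
    nm_diag]

theorem obj_eq_of_empty (T : TambaraFunctor G) {P : GSet G} (h : IsEmpty P.carrier)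
    (x y : T.obj P) : x = y := by
  let e : GSetHom (GSet.empty G) P := ⟨fun q => q.elim, fun g q => q.elim⟩
  let e' : GSetHom P (GSet.empty G) := ⟨fun q => (h.false q).elim, fun g q => (h.false q).elim⟩
  have hcomp : GSetHom.comp e e' = GSetHom.id P :=
    GSetHom.ext' (funext fun q => (h.false q).elim)
  have hx : T.res e' (T.res e x) = x := by rw [T.res_comp, hcomp, T.res_id]
  have hy : T.res e' (T.res e y) = y := by rw [T.res_comp, hcomp, T.res_id]
  rw [← hx, ← hy, T.empty_subsingleton (T.res e x) (T.res e y)]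

section Master

variable (T : TambaraFunctor G)

theorem res_tr_strIso {P Q : GSet G} (j : StrIso P Q) (y : T.obj P) :
    T.res j.hom (T.tr j.hom y) = y := by
  rw [T.tr_bc j.hom j.hom y,
    tr_res_pb_congr T j.hom j.hom (GSetHom.id P) (GSetHom.id P)
      (fun x y => ⟨fun h => j.hom_inj h, fun h => by exact congrArg j.hom.toFun h⟩) y,
    tr_diag]

theorem res_nm_strIso {P Q : GSet G} (j : StrIso P Q) (y : T.obj P) :
    T.res j.hom (T.nm j.hom y) = y := by
  rw [T.nm_bc j.hom j.hom y,
    nm_res_pb_congr T j.hom j.hom (GSetHom.id P) (GSetHom.id P)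
      (fun x y => ⟨fun h => j.hom_inj h, fun h => by exact congrArg j.hom.toFun h⟩) y,
    nm_diag]

theorem res_hom_inj {P Q : GSet G} (j : StrIso P Q) :
    Function.Injective (T.res j.hom) := by
  intro z z' h
  have h2 := congrArg (T.res j.inv) h
  rwa [T.res_comp, T.res_comp, j.left, T.res_id, T.res_id] at h2

theorem tr_res_strIso {P Q : GSet G} (j : StrIso P Q) (w : T.obj Q) :
    T.tr j.hom (T.res j.hom w) = w := by
  apply res_hom_inj T j
  rw [res_tr_strIso]

theorem nm_res_strIso {P Q : GSet G} (j : StrIso P Q) (w : T.obj Q) :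
    T.nm j.hom (T.res j.hom w) = w := by
  apply res_hom_inj T j
  rw [res_nm_strIso]

/-- Base change along a square strictly isomorphic to the canonical pullback: `tr` version. -/
theorem tr_bc_iso {X Y Z Q : GSet G} (f : GSetHom X Z) (g : GSetHom Y Z)
    (aa : GSetHom Q X) (bb : GSetHom Q Y) (j : StrIso (GSet.pullback f g) Q)
    (ha : aa.comp j.hom = GSet.pbFst f g) (hb : bb.comp j.hom = GSet.pbSnd f g)
    (x : T.obj X) : T.res g (T.tr f x) = T.tr bb (T.res aa x) := by
  rw [T.tr_bc f g x, ← ha, ← hb, ← T.tr_comp j.hom bb, ← T.res_comp j.hom aa x,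
    tr_res_strIso]

/-- Base change along a square strictly isomorphic to the canonical pullback: `nm` version. -/
theorem nm_bc_iso {X Y Z Q : GSet G} (f : GSetHom X Z) (g : GSetHom Y Z)
    (aa : GSetHom Q X) (bb : GSetHom Q Y) (j : StrIso (GSet.pullback f g) Q)
    (ha : aa.comp j.hom = GSet.pbFst f g) (hb : bb.comp j.hom = GSet.pbSnd f g)
    (x : T.obj X) : T.res g (T.nm f x) = T.nm bb (T.res aa x) := by
  rw [T.nm_bc f g x, ← ha, ← hb, ← T.nm_comp j.hom bb, ← T.res_comp j.hom aa x,
    nm_res_strIso]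

noncomputable def strIsoOfBijective {X Y : GSet G} (m : GSetHom X Y)
    (hm : Function.Bijective m.toFun) : StrIso X Y where
  hom := m
  inv := ⟨Function.surjInv hm.2, fun g y => hm.1 (by
    rw [Function.surjInv_eq hm.2 (g • y), m.map_smul, Function.surjInv_eq hm.2 y])⟩
  left := GSetHom.ext' (funext fun y => Function.surjInv_eq hm.2 y)
  right := GSetHom.ext' (funext fun x => Function.leftInverse_surjInv hm x)

end Master

section Sums

variable {G : Type} [Group G]

def copair {C C' X : GSet G} (u : GSetHom C X) (u' : GSetHom C' X) :
    GSetHom (C.sum C') X where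
  toFun := Sum.elim u.toFun u'.toFun
  map_smul := fun g s => by
    cases s with
    | inl c => exact u.map_smul g c
    | inr c => exact u'.map_smul g c

theorem copair_comp_inl {C C' X : GSet G} (u : GSetHom C X) (u' : GSetHom C' X) :
    (copair u u').comp (GSet.inl C C') = u := GSetHom.ext' rfl

theorem copair_comp_inr {C C' X : GSet G} (u : GSetHom C X) (u' : GSetHom C' X) :
    (copair u u').comp (GSet.inr C C') = u' := GSetHom.ext' rfl

def sumMap {D D' C C' : GSet G} (v : GSetHom D C) (v' : GSetHom D' C') :
    GSetHom (D.sum D') (C.sum C') where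
  toFun := Sum.map v.toFun v'.toFun
  map_smul := fun g s => by
    cases s with
    | inl c => exact congrArg Sum.inl (v.map_smul g c)
    | inr c => exact congrArg Sum.inr (v'.map_smul g c)

theorem sumMap_surj {D D' C C' : GSet G} {v : GSetHom D C} {v' : GSetHom D' C'}
    (hv : Function.Surjective v.toFun) (hv' : Function.Surjective v'.toFun) :
    Function.Surjective (sumMap v v').toFun := by
  rintro (c | c')
  · obtain ⟨d, hd⟩ := hv c
    exact ⟨Sum.inl d, congrArg Sum.inl hd⟩
  · obtain ⟨d, hd⟩ := hv' c'
    exact ⟨Sum.inr d, congrArg Sum.inr hd⟩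

variable (T : TambaraFunctor G)

theorem res_inl_tr_inl {C C' : GSet G} (x : T.obj C) :
    T.res (GSet.inl C C') (T.tr (GSet.inl C C') x) = x :=
  res_tr_self_of_inj T _ (fun _ _ h => Sum.inl.inj h) x

theorem res_inr_tr_inr {C C' : GSet G} (x : T.obj C') :
    T.res (GSet.inr C C') (T.tr (GSet.inr C C') x) = x :=
  res_tr_self_of_inj T _ (fun _ _ h => Sum.inr.inj h) x

theorem res_inr_tr_inl {C C' : GSet G} (x : T.obj C) :
    T.res (GSet.inr C C') (T.tr (GSet.inl C C') x) = 0 := by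
  rw [T.tr_bc]
  have hempty : IsEmpty (GSet.pullback (GSet.inl C C') (GSet.inr C C')).carrier :=
    ⟨fun q => Sum.inl_ne_inr q.property⟩
  rw [obj_eq_of_empty T hempty (T.res (GSet.pbFst (GSet.inl C C') (GSet.inr C C')) x) 0,
    map_zero]

theorem res_inl_tr_inr {C C' : GSet G} (x : T.obj C') :
    T.res (GSet.inl C C') (T.tr (GSet.inr C C') x) = 0 := by
  rw [T.tr_bc]
  have hempty : IsEmpty (GSet.pullback (GSet.inr C C') (GSet.inl C C')).carrier :=
    ⟨fun q => Sum.inr_ne_inl q.property⟩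
  rw [obj_eq_of_empty T hempty (T.res (GSet.pbFst (GSet.inr C C') (GSet.inl C C')) x) 0,
    map_zero]

theorem sum_decomp {C C' : GSet G} (t : T.obj (C.sum C')) :
    t = T.tr (GSet.inl C C') (T.res (GSet.inl C C') t)
        + T.tr (GSet.inr C C') (T.res (GSet.inr C C') t) := by
  apply (T.add_bij C C').injective
  show (_, _) = (_, _)
  have h1 : T.res (GSet.inl C C')
      (T.tr (GSet.inl C C') (T.res (GSet.inl C C') t)
        + T.tr (GSet.inr C C') (T.res (GSet.inr C C') t)) = T.res (GSet.inl C C') t := by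
    rw [map_add, res_inl_tr_inl, res_inl_tr_inr, add_zero]
  have h2 : T.res (GSet.inr C C')
      (T.tr (GSet.inl C C') (T.res (GSet.inl C C') t)
        + T.tr (GSet.inr C C') (T.res (GSet.inr C C') t)) = T.res (GSet.inr C C') t := by
    rw [map_add, res_inr_tr_inl, res_inr_tr_inr, zero_add]
  rw [h1, h2]

theorem tr_copair {C C' X : GSet G} (u : GSetHom C X) (u' : GSetHom C' X)
    (t : T.obj (C.sum C')) :
    T.tr (copair u u') t
      = T.tr u (T.res (GSet.inl C C') t) + T.tr u' (T.res (GSet.inr C C') t) := by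
  conv_lhs => rw [sum_decomp T t]
  rw [map_add, T.tr_comp, T.tr_comp, copair_comp_inl, copair_comp_inr]

theorem glue_exists (C C' : GSet G) (x : T.obj C) (x' : T.obj C') :
    ∃ t, T.res (GSet.inl C C') t = x ∧ T.res (GSet.inr C C') t = x' := by
  obtain ⟨t, ht⟩ := (T.add_bij C C').2 (x, x')
  exact ⟨t, congrArg Prod.fst ht, congrArg Prod.snd ht⟩

end Sums

section SumPb

variable {G : Type} [Group G]
variable {D D' C C' : GSet G} (v : GSetHom D C) (v' : GSetHom D' C')

/-- The pullback of `v ⊔ v'` along `inl` is strictly isomorphic to `D`. -/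
def sumPbIsoL : StrIso (GSet.pullback (sumMap v v') (GSet.inl C C')) D where
  hom :=
  { toFun := fun q =>
      match q with
      | ⟨(Sum.inl d, _), _⟩ => d
      | ⟨(Sum.inr _, _), h⟩ => absurd h (fun hh => Sum.inr_ne_inl hh)
    map_smul := fun g q => by
      rcases q with ⟨⟨s, c⟩, h⟩
      cases s with
      | inl d => rfl
      | inr d => exact absurd h (fun hh => Sum.inr_ne_inl hh) }
  inv :=
  { toFun := fun d => ⟨(Sum.inl d, v.toFun d), rfl⟩
    map_smul := fun g d => Subtype.ext (Prod.ext rfl (v.map_smul g d)) }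
  left := GSetHom.ext' rfl
  right := GSetHom.ext' (funext fun q => by
    rcases q with ⟨⟨s, c⟩, h⟩
    cases s with
    | inl d => exact Subtype.ext (Prod.ext rfl (Sum.inl.inj h))
    | inr d => exact absurd h (fun hh => Sum.inr_ne_inl hh))

theorem sumPbIsoL_fst :
    (GSet.inl D D').comp (sumPbIsoL v v').hom = GSet.pbFst (sumMap v v') (GSet.inl C C') :=
  GSetHom.ext' (funext fun q => by
    rcases q with ⟨⟨s, c⟩, h⟩
    cases s with
    | inl d => rfl
    | inr d => exact absurd h (fun hh => Sum.inr_ne_inl hh))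

theorem sumPbIsoL_snd :
    v.comp (sumPbIsoL v v').hom = GSet.pbSnd (sumMap v v') (GSet.inl C C') :=
  GSetHom.ext' (funext fun q => by
    rcases q with ⟨⟨s, c⟩, h⟩
    cases s with
    | inl d => exact Sum.inl.inj h
    | inr d => exact absurd h (fun hh => Sum.inr_ne_inl hh))

/-- The pullback of `v ⊔ v'` along `inr` is strictly isomorphic to `D'`. -/
def sumPbIsoR : StrIso (GSet.pullback (sumMap v v') (GSet.inr C C')) D' where
  hom :=
  { toFun := fun q =>
      match q with
      | ⟨(Sum.inr d, _), _⟩ => d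
      | ⟨(Sum.inl _, _), h⟩ => absurd h (fun hh => Sum.inl_ne_inr hh)
    map_smul := fun g q => by
      rcases q with ⟨⟨s, c⟩, h⟩
      cases s with
      | inr d => rfl
      | inl d => exact absurd h (fun hh => Sum.inl_ne_inr hh) }
  inv :=
  { toFun := fun d => ⟨(Sum.inr d, v'.toFun d), rfl⟩
    map_smul := fun g d => Subtype.ext (Prod.ext rfl (v'.map_smul g d)) }
  left := GSetHom.ext' rfl
  right := GSetHom.ext' (funext fun q => by
    rcases q with ⟨⟨s, c⟩, h⟩
    cases s with
    | inr d => exact Subtype.ext (Prod.ext rfl (Sum.inr.inj h))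
    | inl d => exact absurd h (fun hh => Sum.inl_ne_inr hh))

theorem sumPbIsoR_fst :
    (GSet.inr D D').comp (sumPbIsoR v v').hom = GSet.pbFst (sumMap v v') (GSet.inr C C') :=
  GSetHom.ext' (funext fun q => by
    rcases q with ⟨⟨s, c⟩, h⟩
    cases s with
    | inr d => rfl
    | inl d => exact absurd h (fun hh => Sum.inl_ne_inr hh))

theorem sumPbIsoR_snd :
    v'.comp (sumPbIsoR v v').hom = GSet.pbSnd (sumMap v v') (GSet.inr C C') :=
  GSetHom.ext' (funext fun q => by
    rcases q with ⟨⟨s, c⟩, h⟩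
    cases s with
    | inr d => exact Sum.inr.inj h
    | inl d => exact absurd h (fun hh => Sum.inl_ne_inr hh))

variable (T : TambaraFunctor G)

theorem res_inl_nm_sumMap (Z : T.obj (D.sum D')) :
    T.res (GSet.inl C C') (T.nm (sumMap v v') Z)
      = T.nm v (T.res (GSet.inl D D') Z) :=
  nm_bc_iso T (sumMap v v') (GSet.inl C C') (GSet.inl D D') v (sumPbIsoL v v')
    (sumPbIsoL_fst v v') (sumPbIsoL_snd v v') Z

theorem res_inr_nm_sumMap (Z : T.obj (D.sum D')) :
    T.res (GSet.inr C C') (T.nm (sumMap v v') Z)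
      = T.nm v' (T.res (GSet.inr D D') Z) :=
  nm_bc_iso T (sumMap v v') (GSet.inr C C') (GSet.inr D D') v' (sumPbIsoR v v')
    (sumPbIsoR_fst v v') (sumPbIsoR_snd v v') Z

end SumPb

section Image

variable {G : Type} [Group G]

/-- The image of an equivariant map, as a `G`-set. -/
def imageG {D C : GSet G} (v : GSetHom D C) : GSet G where
  carrier := { c : C.carrier // ∃ d, v.toFun d = c }
  mulAction :=
  { smul := fun g c => ⟨g • c.val, by
      obtain ⟨d, hd⟩ := c.property
      exact ⟨g • d, by rw [v.map_smul, hd]⟩⟩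
    one_smul := fun c => Subtype.ext (one_smul G c.val)
    mul_smul := fun g h c => Subtype.ext (mul_smul g h c.val) }

def imIncl {D C : GSet G} (v : GSetHom D C) : GSetHom (imageG v) C :=
  ⟨Subtype.val, fun _ _ => rfl⟩

def imRestrict {D C : GSet G} (v : GSetHom D C) : GSetHom D (imageG v) :=
  ⟨fun d => ⟨v.toFun d, ⟨d, rfl⟩⟩, fun g d => Subtype.ext (v.map_smul g d)⟩

theorem imIncl_comp {D C : GSet G} (v : GSetHom D C) :
    (imIncl v).comp (imRestrict v) = v := GSetHom.ext' rfl

theorem imRestrict_surj {D C : GSet G} (v : GSetHom D C) :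
    Function.Surjective (imRestrict v).toFun := by
  rintro ⟨c, d, hd⟩
  exact ⟨d, Subtype.ext hd⟩

theorem imIncl_inj {D C : GSet G} (v : GSetHom D C) :
    Function.Injective (imIncl v).toFun := fun x y h => Subtype.ext h

end Image

section Shriek

variable {G : Type} [Group G] (T : TambaraFunctor G)

theorem nm_zero_of_surj {D C : GSet G} (v : GSetHom D C)
    (hv : Function.Surjective v.toFun) : T.nm v 0 = 0 := by
  rw [T.nm_zero]
  have hempty : IsEmpty (GSet.compl v).carrier :=
    ⟨fun y => by obtain ⟨d, hd⟩ := hv y.val; exact y.property d hd⟩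
  rw [obj_eq_of_empty T hempty (1 : T.obj (GSet.compl v)) 0, map_zero]

theorem pbSnd_surj {D C E : GSet G} (v : GSetHom D C) (h : GSetHom E C)
    (hv : Function.Surjective v.toFun) :
    Function.Surjective (GSet.pbSnd v h).toFun := fun e => by
  obtain ⟨d, hd⟩ := hv (h.toFun e)
  exact ⟨⟨(d, e), hd⟩, rfl⟩

/-- `f_! = f_+` for injective `f`. -/
theorem shriek_eq_tr_of_inj {D C : GSet G} (i : GSetHom D C)
    (hi : Function.Injective i.toFun) (y : T.obj D) :
    T.shriek i y = T.tr i y := by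
  classical
  set k : GSetHom (GSet.compl i) C := GSet.complIncl i with hk
  set m : GSetHom (D.sum (GSet.compl i)) C := copair i k with hmdef
  have hminj : Function.Injective m.toFun := by
    rintro (d | e) (d' | e') h
    · exact congrArg Sum.inl (hi h)
    · exact (e'.property d h).elim
    · exact (e.property d' h.symm).elim
    · exact congrArg Sum.inr (Subtype.ext h)
  have hmsurj : Function.Surjective m.toFun := by
    intro c
    by_cases hc : ∃ d, i.toFun d = c
    · obtain ⟨d, hd⟩ := hc
      exact ⟨Sum.inl d, hd⟩
    · exact ⟨Sum.inr ⟨c, fun d hd => hc ⟨d, hd⟩⟩, rfl⟩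
  let j : StrIso (D.sum (GSet.compl i)) C := strIsoOfBijective m ⟨hminj, hmsurj⟩
  have hresinj : Function.Injective (T.res m) := res_hom_inj T j
  apply hresinj
  apply (T.add_bij _ _).injective
  show (_, _) = (_, _)
  have hcl : m.comp (GSet.inl D (GSet.compl i)) = i := GSetHom.ext' rfl
  have hcr : m.comp (GSet.inr D (GSet.compl i)) = k := GSetHom.ext' rfl
  have e1 : T.res (GSet.inl D (GSet.compl i)) (T.res m (T.shriek i y))
      = T.res (GSet.inl D (GSet.compl i)) (T.res m (T.tr i y)) := by
    rw [T.res_comp, T.res_comp, hcl]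
    have h1 : T.res i (T.tr i y) = y := res_tr_self_of_inj T i hi y
    have h2 : T.res i (T.shriek i y) = y := by
      show T.res i (T.nm i y - T.nm i 0) = y
      rw [map_sub, res_nm_self_of_inj T i hi y, res_nm_self_of_inj T i hi 0, sub_zero]
    rw [h1, h2]
  have hempty : IsEmpty (GSet.pullback i k).carrier :=
    ⟨fun q => q.val.2.property q.val.1 q.property⟩
  have e2 : T.res (GSet.inr D (GSet.compl i)) (T.res m (T.shriek i y))
      = T.res (GSet.inr D (GSet.compl i)) (T.res m (T.tr i y)) := by
    rw [T.res_comp, T.res_comp, hcr]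
    have h1 : T.res k (T.tr i y) = 0 := by
      rw [T.tr_bc i k y, obj_eq_of_empty T hempty (T.res (GSet.pbFst i k) y) 0, map_zero]
    have h2 : T.res k (T.shriek i y) = 0 := by
      show T.res k (T.nm i y - T.nm i 0) = 0
      rw [map_sub, T.nm_bc i k y, T.nm_bc i k 0,
        obj_eq_of_empty T hempty (T.res (GSet.pbFst i k) y) (T.res (GSet.pbFst i k) 0),
        sub_self]
    rw [h1, h2]
  rw [e1, e2]

/-- The key normal form: `v_!(y) = i_+(v₀_•(y))` through the image factorization. -/
theorem shriek_eq_tr_nm {D C : GSet G} (v : GSetHom D C) (y : T.obj D) :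
    T.shriek v y = T.tr (imIncl v) (T.nm (imRestrict v) y) := by
  calc T.shriek v y = T.nm v y - T.nm v 0 := rfl
    _ = T.nm (imIncl v) (T.nm (imRestrict v) y)
        - T.nm (imIncl v) (T.nm (imRestrict v) 0) := by
        rw [T.nm_comp, T.nm_comp, imIncl_comp]
    _ = T.shriek (imIncl v) (T.nm (imRestrict v) y) := by
        rw [nm_zero_of_surj T _ (imRestrict_surj v)]; rfl
    _ = T.tr (imIncl v) (T.nm (imRestrict v) y) :=
        shriek_eq_tr_of_inj T _ (imIncl_inj v) _

/-- `f_•` for surjective `f` equals `f_!`. -/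
theorem nm_eq_shriek_of_surj {D C : GSet G} (v : GSetHom D C)
    (hv : Function.Surjective v.toFun) (y : T.obj D) :
    T.nm v y = T.shriek v y := by
  show _ = T.nm v y - T.nm v 0
  rw [nm_zero_of_surj T v hv, sub_zero]

/-- Commuting `f_!` past `tr` via the distributive law. -/
theorem shriek_tr (T : TambaraFunctor G) {X Y C : GSet G} (f : GSetHom X Y)
    (u : GSetHom C X) (E : T.obj C) :
    T.shriek f (T.tr u E)
      = T.tr (GSet.piPr f u)
          (T.shriek (GSet.pbSnd f (GSet.piPr f u)) (T.res (GSet.piEval f u) E)) := by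
  show T.nm f (T.tr u E) - T.nm f 0 = _
  have h0 : (0 : T.obj X) = T.tr u 0 := (map_zero (T.tr u)).symm
  rw [T.distrib f u E, h0, T.distrib f u 0, map_zero (T.res (GSet.piEval f u)),
    ← map_sub (T.tr (GSet.piPr f u))]
  rfl

end Shriek

section Good

variable {G : Type} [Group G]

/-- The surjective normal form of the right-hand side set. -/
def goodSet (T : TambaraFunctor G) (A : GSet G) (a : T.obj A) (X : GSet G) :
    Set (T.obj X) :=
  { α | ∃ (C D : GSet G) (u : GSetHom C X) (v : GSetHom D C) (w : GSetHom D A)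
      (c : T.obj C), Function.Surjective v.toFun ∧ α = T.tr u (c * T.nm v (T.res w a)) }

variable (T : TambaraFunctor G) (A : GSet G) (a : T.obj A)

theorem zero_mem_goodSet (X : GSet G) : (0 : T.obj X) ∈ goodSet T A a X := by
  refine ⟨GSet.empty G, GSet.empty G, ⟨fun q => q.elim, fun g q => q.elim⟩,
    GSetHom.id _, ⟨fun q => q.elim, fun g q => q.elim⟩, 0, fun y => ⟨y, rfl⟩, ?_⟩
  rw [zero_mul, map_zero]

theorem add_mem_goodSet {X : GSet G} {α β : T.obj X} (hα : α ∈ goodSet T A a X)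
    (hβ : β ∈ goodSet T A a X) : α + β ∈ goodSet T A a X := by
  obtain ⟨C, D, u, v, w, c, hv, rfl⟩ := hα
  obtain ⟨C', D', u', v', w', c', hv', rfl⟩ := hβ
  obtain ⟨cc, hl, hr⟩ := glue_exists T C C' c c'
  refine ⟨C.sum C', D.sum D', copair u u', sumMap v v', copair w w', cc,
    sumMap_surj hv hv', ?_⟩
  rw [tr_copair]
  have h1 : T.res (GSet.inl C C')
      (cc * T.nm (sumMap v v') (T.res (copair w w') a)) = c * T.nm v (T.res w a) := by
    rw [map_mul, hl, res_inl_nm_sumMap, T.res_comp, copair_comp_inl]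
  have h2 : T.res (GSet.inr C C')
      (cc * T.nm (sumMap v v') (T.res (copair w w') a)) = c' * T.nm v' (T.res w' a) := by
    rw [map_mul, hr, res_inr_nm_sumMap, T.res_comp, copair_comp_inr]
  rw [h1, h2]

theorem mul_mem_goodSet {X : GSet G} (r : T.obj X) {α : T.obj X}
    (hα : α ∈ goodSet T A a X) : r * α ∈ goodSet T A a X := by
  obtain ⟨C, D, u, v, w, c, hv, rfl⟩ := hα
  refine ⟨C, D, u, v, w, T.res u r * c, hv, ?_⟩
  calc r * T.tr u (c * T.nm v (T.res w a))
      = T.tr u (c * T.nm v (T.res w a)) * r := mul_comm _ _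
    _ = T.tr u ((c * T.nm v (T.res w a)) * T.res u r) :=
        (T.proj_formula u (c * T.nm v (T.res w a)) r).symm
    _ = T.tr u (T.res u r * c * T.nm v (T.res w a)) := congrArg (T.tr u) (by ring)

theorem res_mem_goodSet {X Y : GSet G} (f : GSetHom X Y) {y : T.obj Y}
    (hy : y ∈ goodSet T A a Y) : T.res f y ∈ goodSet T A a X := by
  obtain ⟨C, D, u, v, w, c, hv, rfl⟩ := hy
  refine ⟨GSet.pullback u f, GSet.pullback v (GSet.pbFst u f), GSet.pbSnd u f,
    GSet.pbSnd v (GSet.pbFst u f), w.comp (GSet.pbFst v (GSet.pbFst u f)),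
    T.res (GSet.pbFst u f) c, pbSnd_surj _ _ hv, ?_⟩
  rw [T.tr_bc u f, map_mul, T.nm_bc v (GSet.pbFst u f), T.res_comp]

theorem tr_mem_goodSet {X Y : GSet G} (f : GSetHom X Y) {x : T.obj X}
    (hx : x ∈ goodSet T A a X) : T.tr f x ∈ goodSet T A a Y := by
  obtain ⟨C, D, u, v, w, c, hv, rfl⟩ := hx
  exact ⟨C, D, f.comp u, v, w, c, hv, by rw [T.tr_comp]⟩

theorem shriek_mem_goodSet {X Y : GSet G} (f : GSetHom X Y) {x : T.obj X}
    (hx : x ∈ goodSet T A a X) : T.shriek f x ∈ goodSet T A a Y := by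
  obtain ⟨C, D, u, v, w, c, hv, rfl⟩ := hx
  set π := GSet.piPr f u with hπ
  set Λ := GSet.pbSnd f π with hΛ
  set ev := GSet.piEval f u with hev
  rw [shriek_tr T f u, map_mul, T.nm_bc v ev, T.res_comp, shriek_eq_tr_nm T Λ,
    map_mul (T.nm (imRestrict Λ)), T.nm_comp, T.tr_comp]
  exact ⟨imageG Λ, GSet.pullback v ev, π.comp (imIncl Λ),
    (imRestrict Λ).comp (GSet.pbSnd v ev), w.comp (GSet.pbFst v ev),
    T.nm (imRestrict Λ) (T.res ev c),
    (imRestrict_surj Λ).comp (pbSnd_surj v ev hv), rfl⟩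

theorem goodSet_eq_shriekSet (X : GSet G) :
    goodSet T A a X
      = { α | ∃ (C D : GSet G) (u : GSetHom C X) (v : GSetHom D C) (w : GSetHom D A)
          (c : T.obj C), α = T.tr u (c * T.shriek v (T.res w a)) } := by
  ext α
  constructor
  · rintro ⟨C, D, u, v, w, c, hv, rfl⟩
    exact ⟨C, D, u, v, w, c, by rw [← nm_eq_shriek_of_surj T v hv]⟩
  · rintro ⟨C, D, u, v, w, c, rfl⟩
    refine ⟨imageG v, D, u.comp (imIncl v), imRestrict v, w, T.res (imIncl v) c,
      imRestrict_surj v, ?_⟩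
    rw [shriek_eq_tr_nm T v, mul_comm (T.res (imIncl v) c), ← T.tr_comp,
      T.proj_formula, mul_comm]

end Good

end NPI

/-- explicit description of the principal ideal `⟨a⟩`:
`⟨a⟩(X) = { u_+(c · v_! w*(a)) }` over diagrams `X ← C ← D → A`. -/
theorem principal_ideal_eq (G : Type) [Group G] [Finite G] (T : TambaraFunctor G)
    (A : GSet G) (a : T.obj A) (X : GSet G) :
    (T.principal A a X : Set (T.obj X)) =
      { α | ∃ (C D : GSet G) (u : GSetHom C X) (v : GSetHom D C) (w : GSetHom D A)
          (c : T.obj C), α = T.tr u (c * T.shriek v (T.res w a)) } := by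
  classical
  let Idl : ∀ Z : GSet G, Ideal (T.obj Z) := fun Z =>
    { carrier := NPI.goodSet T A a Z
      zero_mem' := NPI.zero_mem_goodSet T A a Z
      add_mem' := fun h1 h2 => NPI.add_mem_goodSet T A a h1 h2
      smul_mem' := fun r x hx => by
        simpa [smul_eq_mul] using NPI.mul_mem_goodSet T A a r hx }
  have hIdl : T.IsIdeal Idl :=
    { res_mem := fun {X Y} f {y} hy => NPI.res_mem_goodSet T A a f hy
      tr_mem := fun {X Y} f {x} hx => NPI.tr_mem_goodSet T A a f hx
      shriek_mem := fun {X Y} f {x} hx => NPI.shriek_mem_goodSet T A a f hx }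
  have hsingle : ∀ Z, T.single A a Z ⊆ (Idl Z : Set (T.obj Z)) := by
    rintro Z x ⟨rfl, rfl⟩
    refine ⟨A, A, GSetHom.id A, GSetHom.id A, GSetHom.id A, 1, fun y => ⟨y, rfl⟩, ?_⟩
    rw [T.res_id, T.nm_id, one_mul, T.tr_id]
  ext α
  simp only [SetLike.mem_coe, Set.mem_setOf_eq]
  constructor
  · intro hα
    have hm : α ∈ NPI.goodSet T A a X := by
      have hb : α ∈ T.gen (T.single A a) X := hα
      simp only [TambaraFunctor.gen, Submodule.mem_iInf] at hb
      exact hb Idl hIdl hsingle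
    rw [NPI.goodSet_eq_shriekSet T A a X] at hm
    exact hm
  · rintro ⟨C, D, u, v, w, c, rfl⟩
    show _ ∈ T.gen (T.single A a) X
    simp only [TambaraFunctor.gen, Submodule.mem_iInf]
    intro I hI hS
    have ha : a ∈ I A := hS A ⟨rfl, rfl⟩
    exact hI.tr_mem u (Ideal.mul_mem_left _ c (hI.shriek_mem v (hI.res_mem w ha)))
end

section
/- Let T be a Tambara functor on a finite group G and 𝔦, 𝔧 ⊆ T ideals. Define 𝔦𝔧(X) = { p_+(ab) : p ∈ G-Set(A,X), a ∈ 𝔦(A), b ∈ 𝔧(A) } for each finite G-set X. Then 𝔦𝔧 is an ideal of T, and 𝔦𝔧 ⊆ 𝔦 ∩ 𝔧. -/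
set_option autoImplicit false

section Auxiliary

variable {G : Type} [Group G]

theorem GSetHom.ext'' {X Y : GSet G} {f g : GSetHom X Y} (h : f.toFun = g.toFun) : f = g := by
  cases f; cases g; cases h; rfl

/-- If a `G`-set has empty carrier, the Tambara functor value on it is a zero ring. -/
theorem TambaraFunctor.obj_subsingleton (T : TambaraFunctor G) {Z : GSet G}
    (h : Z.carrier → False) (z z' : T.obj Z) : z = z' := by
  let m : GSetHom Z (GSet.empty G) := ⟨fun x => (h x).elim, fun g x => (h x).elim⟩
  let n : GSetHom (GSet.empty G) Z := ⟨fun e => e.elim, fun g e => e.elim⟩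
  have hc : GSetHom.comp n m = GSetHom.id Z := GSetHom.ext'' (funext fun x => (h x).elim)
  have key : ∀ w : T.obj Z, w = T.res m (T.res n w) := by
    intro w
    rw [T.res_comp m n w, hc, T.res_id]
  rw [key z, key z', T.empty_subsingleton (T.res n z) (T.res n z')]

/-- For an injective map `f`, `res f ∘ tr f` is multiplication by a unit. -/
theorem TambaraFunctor.conj_unit (T : TambaraFunctor G) {A Y : GSet G} (f : GSetHom A Y)
    (hinj : Function.Injective f.toFun) :
    ∃ e w : T.obj A, (∀ x, T.res f (T.tr f x) = e * x) ∧ e * w = 1 := by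
  let t₁ := GSet.pbFst f f
  have ht : GSet.pbSnd f f = t₁ := GSetHom.ext'' (funext fun q => (hinj q.property).symm)
  let δ : GSetHom A (GSet.pullback f f) := ⟨fun x => ⟨(x, x), rfl⟩, fun g x => rfl⟩
  have h1 : GSetHom.comp t₁ δ = GSetHom.id A := GSetHom.ext'' rfl
  have h2 : GSetHom.comp δ t₁ = GSetHom.id (GSet.pullback f f) :=
    GSetHom.ext'' (funext fun q => Subtype.ext (Prod.ext rfl (hinj q.property)))
  refine ⟨T.tr t₁ 1, T.res δ (T.tr δ 1), fun x => ?_, ?_⟩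
  · rw [T.tr_bc f f x, ht]
    have hp := T.proj_formula t₁ 1 x
    rw [one_mul] at hp
    exact hp
  · have hp := T.proj_formula t₁ 1 (T.res δ (T.tr δ 1))
    rw [one_mul] at hp
    rw [← hp, T.res_comp t₁ δ, h2, T.res_id, T.tr_comp δ t₁, h1, T.tr_id]

/-- If the pullback of `f` and `g` is empty, then `res g ∘ tr f = 0`. -/
theorem TambaraFunctor.res_tr_zero (T : TambaraFunctor G) {X Y Z : GSet G}
    (f : GSetHom X Z) (g : GSetHom Y Z) (h : (GSet.pullback f g).carrier → False)
    (x : T.obj X) : T.res g (T.tr f x) = 0 := by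
  rw [T.tr_bc f g x, T.obj_subsingleton h (T.res (GSet.pbFst f g) x) 0, map_zero]

theorem TambaraFunctor.nm_zero_mul (T : TambaraFunctor G) {W V : GSet G} (q : GSetHom W V)
    (u : T.obj W) : T.nm q 0 * T.nm q u = T.nm q 0 := by
  have hsub : T.res (GSet.pbFst q (GSet.complIncl q)) u
      = T.res (GSet.pbFst q (GSet.complIncl q)) 1 :=
    T.obj_subsingleton (Z := GSet.pullback q (GSet.complIncl q))
      (fun pq => pq.val.2.property pq.val.1 pq.property) _ _
  have hres : T.res (GSet.complIncl q) (T.nm q u) = 1 := by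
    rw [T.nm_bc q (GSet.complIncl q) u, hsub, map_one, map_one]
  have hp := T.proj_formula (GSet.complIncl q) 1 (T.nm q u)
  rw [one_mul, hres] at hp
  rw [T.nm_zero q]
  exact hp.symm

/-- `f_!` is multiplicative (though not unital). -/
theorem TambaraFunctor.shriek_mul (T : TambaraFunctor G) {W V : GSet G} (q : GSetHom W V)
    (x y : T.obj W) : T.shriek q (x * y) = T.shriek q x * T.shriek q y := by
  have hx := T.nm_zero_mul q x
  have hy := T.nm_zero_mul q y
  have hz := T.nm_zero_mul q 0
  unfold TambaraFunctor.shriek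
  rw [map_mul]
  linear_combination hx + hy - hz

/-- The distributive law in terms of `f_!`. -/
theorem TambaraFunctor.shriek_tr (T : TambaraFunctor G) {X Y A : GSet G}
    (f : GSetHom X Y) (p : GSetHom A X) (m : T.obj A) :
    T.shriek f (T.tr p m) =
      T.tr (GSet.piPr f p) (T.shriek (GSet.pbSnd f (GSet.piPr f p))
        (T.res (GSet.piEval f p) m)) := by
  have h0 : T.nm f 0 = T.tr (GSet.piPr f p)
      (T.nm (GSet.pbSnd f (GSet.piPr f p)) 0) := by
    conv_lhs => rw [← map_zero (T.tr p)]
    rw [T.distrib f p 0, map_zero (T.res (GSet.piEval f p))]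
  unfold TambaraFunctor.shriek
  rw [map_sub, T.distrib f p m, h0]

/-- The levelwise set `mulSet` assembled into an ideal of the ring `T(X)`. -/
def TambaraFunctor.mulK (T : TambaraFunctor G) (I J : ∀ X : GSet G, Ideal (T.obj X))
    (hI : T.IsIdeal I) (hJ : T.IsIdeal J) (X : GSet G) : Ideal (T.obj X) where
  carrier := T.mulSet I J X
  zero_mem' := ⟨X, GSetHom.id X, 0, 0, zero_mem _, zero_mem _, by
    rw [mul_zero, map_zero]⟩
  smul_mem' := fun r x hx => by
    obtain ⟨A, p, a, b, ha, hb, rfl⟩ := hx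
    refine ⟨A, p, a * T.res p r, b, Ideal.mul_mem_right _ _ ha, hb, ?_⟩
    have hp := T.proj_formula p (a * b) r
    calc r • T.tr p (a * b) = T.tr p (a * b) * r := by rw [smul_eq_mul, mul_comm]
      _ = T.tr p (a * b * T.res p r) := hp.symm
      _ = T.tr p (a * T.res p r * b) := by rw [mul_right_comm]
  add_mem' := by
    rintro x y ⟨A, p, a, b, ha, hb, rfl⟩ ⟨B, q, c, d, hc, hd, rfl⟩
    obtain ⟨eA, wA, heA, hwA⟩ := T.conj_unit (GSet.inl A B) (fun _ _ h => Sum.inl.inj h)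
    obtain ⟨eB, wB, heB, hwB⟩ := T.conj_unit (GSet.inr A B) (fun _ _ h => Sum.inr.inj h)
    set iA := GSet.inl A B with hiA
    set iB := GSet.inr A B with hiB
    let r : GSetHom (A.sum B) X :=
      ⟨Sum.elim p.toFun q.toFun, by
        rintro g (z | z)
        · exact p.map_smul g z
        · exact q.map_smul g z⟩
    have hrA : GSetHom.comp r iA = p := GSetHom.ext'' rfl
    have hrB : GSetHom.comp r iB = q := GSetHom.ext'' rfl
    have hAB : T.res iA (T.tr iB d) = 0 :=
      T.res_tr_zero iB iA (fun z => Sum.inr_ne_inl z.property) d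
    have hBA : T.res iB (T.tr iA b) = 0 :=
      T.res_tr_zero iA iB (fun z => Sum.inl_ne_inr z.property) b
    have resAV : T.res iA (T.tr iA b + T.tr iB d) = eA * b := by
      rw [map_add, heA b, hAB, add_zero]
    have resBV : T.res iB (T.tr iA b + T.tr iB d) = eB * d := by
      rw [map_add, heB d, hBA, zero_add]
    refine ⟨A.sum B, r,
      T.tr iA (wA * a) + T.tr iB (wB * c), T.tr iA b + T.tr iB d,
      add_mem (hI.tr_mem iA (Ideal.mul_mem_left _ _ ha))
        (hI.tr_mem iB (Ideal.mul_mem_left _ _ hc)),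
      add_mem (hJ.tr_mem iA hb) (hJ.tr_mem iB hd), ?_⟩
    have h1 : T.tr iA (wA * a) * (T.tr iA b + T.tr iB d)
        = T.tr iA (wA * a * (eA * b)) := by
      rw [← T.proj_formula iA (wA * a) (T.tr iA b + T.tr iB d), resAV]
    have h2 : T.tr iB (wB * c) * (T.tr iA b + T.tr iB d)
        = T.tr iB (wB * c * (eB * d)) := by
      rw [← T.proj_formula iB (wB * c) (T.tr iA b + T.tr iB d), resBV]
    rw [add_mul, h1, h2, map_add, T.tr_comp iA r, T.tr_comp iB r, hrA, hrB]
    have e1 : wA * a * (eA * b) = a * b := by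
      have h : wA * a * (eA * b) = eA * wA * (a * b) := by ring
      rw [h, hwA, one_mul]
    have e2 : wB * c * (eB * d) = c * d := by
      have h : wB * c * (eB * d) = eB * wB * (c * d) := by ring
      rw [h, hwB, one_mul]
    rw [e1, e2]

end Auxiliary

/-- the product of two ideals is an ideal (whose levels are exactly the
sets `{ p_+(ab) }`), and it is contained in their intersection. -/
theorem mulIdl_isIdeal_and_le_inf (G : Type) [Group G] [Finite G] (T : TambaraFunctor G)
    (I J : ∀ X : GSet G, Ideal (T.obj X)) (hI : T.IsIdeal I) (hJ : T.IsIdeal J) :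
    T.IsIdeal (T.mulIdl I J) ∧
    (∀ X : GSet G, (T.mulIdl I J X : Set (T.obj X)) = T.mulSet I J X) ∧
    (∀ X : GSet G, T.mulIdl I J X ≤ I X ⊓ J X) := by
  have hEq : ∀ X : GSet G, T.mulIdl I J X = T.mulK I J hI hJ X := by
    intro X
    apply le_antisymm
    · exact Ideal.span_le.mpr (fun x hx => hx)
    · exact fun x hx => Ideal.subset_span hx
  refine ⟨⟨?_, ?_, ?_⟩, ?_, ?_⟩
  · intro X Y f y hy
    rw [hEq] at hy ⊢
    obtain ⟨A, p, a, b, ha, hb, rfl⟩ := hy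
    refine ⟨GSet.pullback p f, GSet.pbSnd p f, T.res (GSet.pbFst p f) a,
      T.res (GSet.pbFst p f) b, hI.res_mem _ ha, hJ.res_mem _ hb, ?_⟩
    rw [T.tr_bc p f, map_mul]
  · intro X Y f x hx
    rw [hEq] at hx ⊢
    obtain ⟨A, p, a, b, ha, hb, rfl⟩ := hx
    exact ⟨A, GSetHom.comp f p, a, b, ha, hb, T.tr_comp p f _⟩
  · intro X Y f x hx
    rw [hEq] at hx ⊢
    obtain ⟨A, p, a, b, ha, hb, rfl⟩ := hx
    refine ⟨GSet.piObj f p, GSet.piPr f p,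
      T.shriek (GSet.pbSnd f (GSet.piPr f p)) (T.res (GSet.piEval f p) a),
      T.shriek (GSet.pbSnd f (GSet.piPr f p)) (T.res (GSet.piEval f p) b),
      hI.shriek_mem _ (hI.res_mem _ ha), hJ.shriek_mem _ (hJ.res_mem _ hb), ?_⟩
    rw [T.shriek_tr f p, map_mul, T.shriek_mul]
  · intro X
    rw [hEq X]
    rfl
  · intro X
    rw [hEq X]
    rintro x ⟨A, p, a, b, ha, hb, rfl⟩
    exact Submodule.mem_inf.mpr
      ⟨hI.tr_mem p (Ideal.mul_mem_right _ _ ha), hJ.tr_mem p (Ideal.mul_mem_left _ _ hb)⟩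
end

section
/- Let T be a Tambara functor on a finite group G. For ideals 𝔦_1, 𝔦_2, 𝔦_3 ⊆ T, the product is associative: (𝔦_1𝔦_2)𝔦_3 = 𝔦_1(𝔦_2𝔦_3); indeed both equal the ideal whose value at X is { p_+(a_1 a_2 a_3) : p ∈ G-Set(A,X), a_i ∈ 𝔦_i(A) }. -/
set_option autoImplicit false

/-! Auxiliary material for Statement 12 -/

namespace Stmt12

variable {G : Type} [Group G]

theorem gsethom_ext {X Y : GSet G} {f g : GSetHom X Y}
    (h : ∀ x, f.toFun x = g.toFun x) : f = g := by
  cases f with | mk tf mf =>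
  cases g with | mk tg mg =>
  have ht : tf = tg := funext h
  subst ht
  rfl

variable (T : TambaraFunctor G)

theorem obj_subsingleton {X : GSet G} (h : IsEmpty X.carrier)
    (x y : T.obj X) : x = y := by
  let u : GSetHom X (GSet.empty G) := ⟨fun a => (h.false a).elim, fun g a => (h.false a).elim⟩
  let v : GSetHom (GSet.empty G) X := ⟨fun e => e.elim, fun g e => e.elim⟩
  have hvu : GSetHom.comp v u = GSetHom.id X := gsethom_ext fun a => (h.false a).elim
  have hx : ∀ z : T.obj X, T.res u (T.res v z) = z := fun z => by
    rw [T.res_comp, hvu, T.res_id]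
  rw [← hx x, ← hx y, T.empty_subsingleton (T.res v x) (T.res v y)]

theorem res_tr_of_empty {A B S : GSet G} (f : GSetHom A S) (g : GSetHom B S)
    (h : IsEmpty (GSet.pullback f g).carrier) (a : T.obj A) :
    T.res g (T.tr f a) = 0 := by
  rw [T.tr_bc f g a, obj_subsingleton T h (T.res (GSet.pbFst f g) a) 0, map_zero]

/-- The diagonal section of the self-pullback. -/
def diag {X Y : GSet G} (f : GSetHom X Y) : GSetHom X (GSet.pullback f f) where
  toFun x := ⟨(x, x), rfl⟩
  map_smul g x := rfl

theorem pb_fst_eq_snd {X Y : GSet G} {f : GSetHom X Y}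
    (hf : Function.Injective f.toFun) :
    GSet.pbFst f f = GSet.pbSnd f f :=
  gsethom_ext fun q => hf q.property

theorem snd_comp_diag {X Y : GSet G} (f : GSetHom X Y) :
    GSetHom.comp (GSet.pbSnd f f) (diag f) = GSetHom.id X :=
  gsethom_ext fun _ => rfl

theorem diag_comp_snd {X Y : GSet G} {f : GSetHom X Y}
    (hf : Function.Injective f.toFun) :
    GSetHom.comp (diag f) (GSet.pbSnd f f) = GSetHom.id (GSet.pullback f f) :=
  gsethom_ext fun q => Subtype.ext (Prod.ext (hf q.property).symm rfl)

theorem res_tr_self {X Y : GSet G} (f : GSetHom X Y)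
    (hf : Function.Injective f.toFun) (x : T.obj X) :
    T.res f (T.tr f x) = T.tr (GSet.pbSnd f f) 1 * x := by
  rw [T.tr_bc f f x, pb_fst_eq_snd hf, ← T.proj_formula (GSet.pbSnd f f) 1 x, one_mul]

theorem unit_cancel {X Y : GSet G} (f : GSetHom X Y)
    (hf : Function.Injective f.toFun) :
    T.tr (GSet.pbSnd f f) 1 * T.res (diag f) (T.tr (diag f) 1) = 1 := by
  rw [← T.proj_formula (GSet.pbSnd f f) 1 (T.res (diag f) (T.tr (diag f) 1)), one_mul,
    T.res_comp, diag_comp_snd hf, T.res_id, T.tr_comp, snd_comp_diag, T.tr_id]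

section SumStuff

variable {A B X : GSet G}

theorem isEmpty_pb_lr :
    IsEmpty (GSet.pullback (GSet.inl A B) (GSet.inr A B)).carrier :=
  ⟨fun q => Sum.inl_ne_inr q.property⟩

theorem isEmpty_pb_rl :
    IsEmpty (GSet.pullback (GSet.inr A B) (GSet.inl A B)).carrier :=
  ⟨fun q => Sum.inr_ne_inl q.property⟩

theorem inl_inj : Function.Injective (GSet.inl A B).toFun := fun a b h =>
  Sum.inl.inj h

theorem inr_inj : Function.Injective (GSet.inr A B).toFun := fun a b h =>
  Sum.inr.inj h

/-- The copairing of two equivariant maps on a disjoint union. -/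
def sumElim (p : GSetHom A X) (q : GSetHom B X) : GSetHom (A.sum B) X where
  toFun := Sum.elim p.toFun q.toFun
  map_smul g s := by
    cases s with
    | inl a => exact p.map_smul g a
    | inr b => exact q.map_smul g b

theorem sumElim_comp_inl (p : GSetHom A X) (q : GSetHom B X) :
    GSetHom.comp (sumElim p q) (GSet.inl A B) = p :=
  gsethom_ext fun _ => rfl

theorem sumElim_comp_inr (p : GSetHom A X) (q : GSetHom B X) :
    GSetHom.comp (sumElim p q) (GSet.inr A B) = q :=
  gsethom_ext fun _ => rfl

theorem sum_mul_sum (a a' : T.obj A) (b b' : T.obj B) :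
    (T.tr (GSet.inl A B) a + T.tr (GSet.inr A B) b) *
      (T.tr (GSet.inl A B) a' + T.tr (GSet.inr A B) b') =
    T.tr (GSet.inl A B)
        (a * (T.tr (GSet.pbSnd (GSet.inl A B) (GSet.inl A B)) 1 * a')) +
      T.tr (GSet.inr A B)
        (b * (T.tr (GSet.pbSnd (GSet.inr A B) (GSet.inr A B)) 1 * b')) := by
  have h11 : T.tr (GSet.inl A B) a * T.tr (GSet.inl A B) a' =
      T.tr (GSet.inl A B)
        (a * (T.tr (GSet.pbSnd (GSet.inl A B) (GSet.inl A B)) 1 * a')) := by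
    rw [← T.proj_formula (GSet.inl A B) a (T.tr (GSet.inl A B) a'),
      res_tr_self T (GSet.inl A B) inl_inj a']
  have h12 : T.tr (GSet.inl A B) a * T.tr (GSet.inr A B) b' = 0 := by
    rw [← T.proj_formula (GSet.inl A B) a (T.tr (GSet.inr A B) b'),
      res_tr_of_empty T (GSet.inr A B) (GSet.inl A B) isEmpty_pb_rl b', mul_zero, map_zero]
  have h21 : T.tr (GSet.inr A B) b * T.tr (GSet.inl A B) a' = 0 := by
    rw [← T.proj_formula (GSet.inr A B) b (T.tr (GSet.inl A B) a'),
      res_tr_of_empty T (GSet.inl A B) (GSet.inr A B) isEmpty_pb_lr a', mul_zero, map_zero]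
  have h22 : T.tr (GSet.inr A B) b * T.tr (GSet.inr A B) b' =
      T.tr (GSet.inr A B)
        (b * (T.tr (GSet.pbSnd (GSet.inr A B) (GSet.inr A B)) 1 * b')) := by
    rw [← T.proj_formula (GSet.inr A B) b (T.tr (GSet.inr A B) b'),
      res_tr_self T (GSet.inr A B) inr_inj b']
  rw [add_mul, mul_add, mul_add, h11, h12, h21, h22, add_zero, zero_add]

end SumStuff

variable (I₁ I₂ I₃ : ∀ X : GSet G, Ideal (T.obj X))

/-- The candidate set of values of the triple product. -/
def S3set (X : GSet G) : Set (T.obj X) :=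
  { x | ∃ (A : GSet G) (p : GSetHom A X) (a₁ a₂ a₃ : T.obj A),
      a₁ ∈ I₁ A ∧ a₂ ∈ I₂ A ∧ a₃ ∈ I₃ A ∧ x = T.tr p (a₁ * a₂ * a₃) }

theorem S3set_zero (X : GSet G) : (0 : T.obj X) ∈ S3set T I₁ I₂ I₃ X :=
  ⟨GSet.empty G, ⟨fun e => e.elim, fun g e => e.elim⟩, 0, 0, 0,
    zero_mem _, zero_mem _, zero_mem _, by rw [mul_zero, map_zero]⟩

theorem S3set_smul {X : GSet G} (c : T.obj X) {x : T.obj X}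
    (hx : x ∈ S3set T I₁ I₂ I₃ X) : c * x ∈ S3set T I₁ I₂ I₃ X := by
  obtain ⟨A, p, a₁, a₂, a₃, m₁, m₂, m₃, rfl⟩ := hx
  refine ⟨A, p, a₁, a₂, a₃ * T.res p c, m₁, m₂, Ideal.mul_mem_right _ _ m₃, ?_⟩
  rw [mul_comm c, ← T.proj_formula p (a₁ * a₂ * a₃) c, mul_assoc]

theorem S3set_add (h₁ : T.IsIdeal I₁) (h₂ : T.IsIdeal I₂) (h₃ : T.IsIdeal I₃)
    {X : GSet G} {x y : T.obj X}
    (hx : x ∈ S3set T I₁ I₂ I₃ X) (hy : y ∈ S3set T I₁ I₂ I₃ X) :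
    x + y ∈ S3set T I₁ I₂ I₃ X := by
  obtain ⟨A, p, a₁, a₂, a₃, m₁, m₂, m₃, rfl⟩ := hx
  obtain ⟨B, q, b₁, b₂, b₃, n₁, n₂, n₃, rfl⟩ := hy
  have hαu : T.tr (GSet.pbSnd (GSet.inl A B) (GSet.inl A B)) 1 *
      T.res (diag (GSet.inl A B)) (T.tr (diag (GSet.inl A B)) 1) = 1 :=
    unit_cancel T (GSet.inl A B) inl_inj
  have hβu : T.tr (GSet.pbSnd (GSet.inr A B) (GSet.inr A B)) 1 *
      T.res (diag (GSet.inr A B)) (T.tr (diag (GSet.inr A B)) 1) = 1 :=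
    unit_cancel T (GSet.inr A B) inr_inj
  refine ⟨A.sum B, sumElim p q,
    T.tr (GSet.inl A B)
        (T.res (diag (GSet.inl A B)) (T.tr (diag (GSet.inl A B)) 1) *
          T.res (diag (GSet.inl A B)) (T.tr (diag (GSet.inl A B)) 1) * a₁) +
      T.tr (GSet.inr A B)
        (T.res (diag (GSet.inr A B)) (T.tr (diag (GSet.inr A B)) 1) *
          T.res (diag (GSet.inr A B)) (T.tr (diag (GSet.inr A B)) 1) * b₁),
    T.tr (GSet.inl A B) a₂ + T.tr (GSet.inr A B) b₂,
    T.tr (GSet.inl A B) a₃ + T.tr (GSet.inr A B) b₃,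
    ?_, ?_, ?_, ?_⟩
  · exact add_mem (h₁.tr_mem _ (Ideal.mul_mem_left _ _ m₁))
      (h₁.tr_mem _ (Ideal.mul_mem_left _ _ n₁))
  · exact add_mem (h₂.tr_mem _ m₂) (h₂.tr_mem _ n₂)
  · exact add_mem (h₃.tr_mem _ m₃) (h₃.tr_mem _ n₃)
  · rw [sum_mul_sum T, sum_mul_sum T]
    have eA : T.res (diag (GSet.inl A B)) (T.tr (diag (GSet.inl A B)) 1) *
          T.res (diag (GSet.inl A B)) (T.tr (diag (GSet.inl A B)) 1) * a₁ *
          (T.tr (GSet.pbSnd (GSet.inl A B) (GSet.inl A B)) 1 * a₂) *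
          (T.tr (GSet.pbSnd (GSet.inl A B) (GSet.inl A B)) 1 * a₃) = a₁ * a₂ * a₃ := by
      linear_combination (T.tr (GSet.pbSnd (GSet.inl A B) (GSet.inl A B)) 1 *
          T.res (diag (GSet.inl A B)) (T.tr (diag (GSet.inl A B)) 1) + 1) *
          (a₁ * a₂ * a₃) * hαu
    have eB : T.res (diag (GSet.inr A B)) (T.tr (diag (GSet.inr A B)) 1) *
          T.res (diag (GSet.inr A B)) (T.tr (diag (GSet.inr A B)) 1) * b₁ *
          (T.tr (GSet.pbSnd (GSet.inr A B) (GSet.inr A B)) 1 * b₂) *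
          (T.tr (GSet.pbSnd (GSet.inr A B) (GSet.inr A B)) 1 * b₃) = b₁ * b₂ * b₃ := by
      linear_combination (T.tr (GSet.pbSnd (GSet.inr A B) (GSet.inr A B)) 1 *
          T.res (diag (GSet.inr A B)) (T.tr (diag (GSet.inr A B)) 1) + 1) *
          (b₁ * b₂ * b₃) * hβu
    rw [eA, eB, map_add, T.tr_comp, T.tr_comp, sumElim_comp_inl, sumElim_comp_inr]

/-- The triple product ideal. -/
def S3 (h₁ : T.IsIdeal I₁) (h₂ : T.IsIdeal I₂) (h₃ : T.IsIdeal I₃) (X : GSet G) :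
    Ideal (T.obj X) where
  carrier := S3set T I₁ I₂ I₃ X
  zero_mem' := S3set_zero T I₁ I₂ I₃ X
  add_mem' := S3set_add T I₁ I₂ I₃ h₁ h₂ h₃
  smul_mem' := fun c _ hx => S3set_smul T I₁ I₂ I₃ c hx

end Stmt12
namespace Stmt12

variable {G : Type} [Group G] (T : TambaraFunctor G)
variable (I₁ I₂ I₃ : ∀ X : GSet G, Ideal (T.obj X))

theorem lemA (h₁ : T.IsIdeal I₁) (h₂ : T.IsIdeal I₂) (h₃ : T.IsIdeal I₃) (X : GSet G) :
    T.mulIdl (T.mulIdl I₁ I₂) I₃ X = S3 T I₁ I₂ I₃ h₁ h₂ h₃ X := by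
  apply le_antisymm
  · refine Ideal.span_le.mpr ?_
    rintro x ⟨A, p, c, a₃, hc, h3, rfl⟩
    have hc' : c ∈ Ideal.span (T.mulSet I₁ I₂ A) := hc
    clear hc
    have key : ∀ r : T.obj A,
        T.tr p (r * (c * a₃)) ∈ S3 T I₁ I₂ I₃ h₁ h₂ h₃ X := by
      induction hc' using Submodule.span_induction with
      | mem d hd =>
        obtain ⟨B, q, a₁, a₂, m₁, m₂, rfl⟩ := hd
        intro r
        refine ⟨B, GSetHom.comp p q, a₁, a₂, T.res q (r * a₃), m₁, m₂,
          h₃.res_mem q (Ideal.mul_mem_left _ _ h3), ?_⟩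
        rw [← T.tr_comp, T.proj_formula q (a₁ * a₂) (r * a₃)]
        exact congrArg (fun z => T.tr p z) (by ring)
      | zero =>
        intro r
        rw [zero_mul, mul_zero, map_zero]
        exact zero_mem _
      | add u v hu hv ihu ihv =>
        intro r
        have h' : r * ((u + v) * a₃) = r * (u * a₃) + r * (v * a₃) := by ring
        rw [h', map_add]
        exact add_mem (ihu r) (ihv r)
      | smul s u hu ihu =>
        intro r
        have h' : r * (s • u * a₃) = (r * s) * (u * a₃) := by
          rw [smul_eq_mul]; ring
        rw [h']
        exact ihu (r * s)
    have hk := key 1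
    rwa [one_mul] at hk
  · rintro x ⟨A, p, a₁, a₂, a₃, m₁, m₂, m₃, rfl⟩
    exact Ideal.subset_span ⟨A, p, a₁ * a₂, a₃,
      Ideal.subset_span ⟨A, GSetHom.id A, a₁, a₂, m₁, m₂, (T.tr_id _).symm⟩, m₃, rfl⟩

theorem lemB (h₁ : T.IsIdeal I₁) (h₂ : T.IsIdeal I₂) (h₃ : T.IsIdeal I₃) (X : GSet G) :
    T.mulIdl I₁ (T.mulIdl I₂ I₃) X = S3 T I₁ I₂ I₃ h₁ h₂ h₃ X := by
  apply le_antisymm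
  · refine Ideal.span_le.mpr ?_
    rintro x ⟨A, p, a₁, c, h1, hc, rfl⟩
    have hc' : c ∈ Ideal.span (T.mulSet I₂ I₃ A) := hc
    clear hc
    have key : ∀ r : T.obj A,
        T.tr p (r * (a₁ * c)) ∈ S3 T I₁ I₂ I₃ h₁ h₂ h₃ X := by
      induction hc' using Submodule.span_induction with
      | mem d hd =>
        obtain ⟨B, q, a₂, a₃, m₂, m₃, rfl⟩ := hd
        intro r
        refine ⟨B, GSetHom.comp p q, T.res q (r * a₁), a₂, a₃,
          h₁.res_mem q (Ideal.mul_mem_left _ _ h1), m₂, m₃, ?_⟩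
        rw [← T.tr_comp]
        have hq : T.res q (r * a₁) * a₂ * a₃ = a₂ * a₃ * T.res q (r * a₁) := by ring
        rw [hq, T.proj_formula q (a₂ * a₃) (r * a₁)]
        exact congrArg (fun z => T.tr p z) (by ring)
      | zero =>
        intro r
        rw [mul_zero, mul_zero, map_zero]
        exact zero_mem _
      | add u v hu hv ihu ihv =>
        intro r
        have h' : r * (a₁ * (u + v)) = r * (a₁ * u) + r * (a₁ * v) := by ring
        rw [h', map_add]
        exact add_mem (ihu r) (ihv r)
      | smul s u hu ihu =>
        intro r
        have h' : r * (a₁ * (s • u)) = (r * s) * (a₁ * u) := by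
          rw [smul_eq_mul]; ring
        rw [h']
        exact ihu (r * s)
    have hk := key 1
    rwa [one_mul] at hk
  · rintro x ⟨A, p, a₁, a₂, a₃, m₁, m₂, m₃, rfl⟩
    refine Ideal.subset_span ⟨A, p, a₁, a₂ * a₃, m₁,
      Ideal.subset_span ⟨A, GSetHom.id A, a₂, a₃, m₂, m₃, (T.tr_id _).symm⟩, ?_⟩
    rw [mul_assoc]

end Stmt12
/-- products of ideals are associative; the triple product has levels
`{ p_+(a₁a₂a₃) }`. -/
theorem mulIdl_assoc (G : Type) [Group G] [Finite G] (T : TambaraFunctor G)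
    (I₁ I₂ I₃ : ∀ X : GSet G, Ideal (T.obj X))
    (h₁ : T.IsIdeal I₁) (h₂ : T.IsIdeal I₂) (h₃ : T.IsIdeal I₃) :
    T.mulIdl (T.mulIdl I₁ I₂) I₃ = T.mulIdl I₁ (T.mulIdl I₂ I₃) ∧
    (∀ X : GSet G, (T.mulIdl (T.mulIdl I₁ I₂) I₃ X : Set (T.obj X)) =
      { x | ∃ (A : GSet G) (p : GSetHom A X) (a₁ a₂ a₃ : T.obj A),
          a₁ ∈ I₁ A ∧ a₂ ∈ I₂ A ∧ a₃ ∈ I₃ A ∧ x = T.tr p (a₁ * a₂ * a₃) }) := by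
  refine ⟨funext fun X => ?_, fun X => ?_⟩
  · rw [Stmt12.lemA T I₁ I₂ I₃ h₁ h₂ h₃ X, Stmt12.lemB T I₁ I₂ I₃ h₁ h₂ h₃ X]
  · rw [Stmt12.lemA T I₁ I₂ I₃ h₁ h₂ h₃ X]
    rfl
end

section
/- Let T be a Tambara functor on a finite group G. For any family {𝔦_λ} of ideals of T, the levelwise sum (Σ_λ 𝔦_λ)(X) = Σ_λ 𝔦_λ(X) is an ideal of T; in particular, for ideals 𝔦, 𝔧 and a G-map f : X → Y, f_•(𝔦(X) + 𝔧(X)) ⊆ f_•(0) + 𝔦(Y) + 𝔧(Y). -/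
set_option autoImplicit false

namespace TamAux
variable {G : Type} [Group G]

theorem GSetHom.ext' {X Y : GSet G} {f g : GSetHom X Y} (h : ∀ x, f.toFun x = g.toFun x) :
    f = g := by
  cases f; cases g; congr 1; exact funext h

def pb' (X Y : GSet G) (P : X.carrier × Y.carrier → Prop)
    (hP : ∀ (a : G) (q : X.carrier × Y.carrier), P q → P (a • q)) : GSet G where
  carrier := { q : X.carrier × Y.carrier // P q }
  mulAction :=
  { smul := fun a q => ⟨a • q.val, hP a q.val q.property⟩
    one_smul := fun q => Subtype.ext (one_smul G q.val)
    mul_smul := fun a b q => Subtype.ext (mul_smul a b q.val) }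

def pbFst' (X Y : GSet G) (P : X.carrier × Y.carrier → Prop)
    (hP : ∀ (a : G) (q : X.carrier × Y.carrier), P q → P (a • q)) :
    GSetHom (pb' X Y P hP) X := ⟨fun q => q.val.1, fun _ _ => rfl⟩

def pbSnd' (X Y : GSet G) (P : X.carrier × Y.carrier → Prop)
    (hP : ∀ (a : G) (q : X.carrier × Y.carrier), P q → P (a • q)) :
    GSetHom (pb' X Y P hP) Y := ⟨fun q => q.val.2, fun _ _ => rfl⟩

theorem pbPred_smul {X Y Z : GSet G} (f : GSetHom X Z) (g : GSetHom Y Z) :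
    ∀ (a : G) (q : X.carrier × Y.carrier),
      (f.toFun q.1 = g.toFun q.2) → (f.toFun (a • q).1 = g.toFun (a • q).2) :=
  fun a q h => by
    show f.toFun (a • q.1) = g.toFun (a • q.2)
    rw [f.map_smul, g.map_smul, h]

theorem pb'_tr_congr (T : TambaraFunctor G) {X Y : GSet G}
    {P₁ P₂ : X.carrier × Y.carrier → Prop} (h : P₁ = P₂) (h₁ h₂) (x : T.obj X) :
    T.tr (pbSnd' X Y P₁ h₁) (T.res (pbFst' X Y P₁ h₁) x)
      = T.tr (pbSnd' X Y P₂ h₂) (T.res (pbFst' X Y P₂ h₂) x) := by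
  subst h; rfl

theorem pb'_nm_congr (T : TambaraFunctor G) {X Y : GSet G}
    {P₁ P₂ : X.carrier × Y.carrier → Prop} (h : P₁ = P₂) (h₁ h₂) (x : T.obj X) :
    T.nm (pbSnd' X Y P₁ h₁) (T.res (pbFst' X Y P₁ h₁) x)
      = T.nm (pbSnd' X Y P₂ h₂) (T.res (pbFst' X Y P₂ h₂) x) := by
  subst h; rfl

theorem pb_tr_eq (T : TambaraFunctor G) {X Y Z₁ Z₂ : GSet G}
    (f₁ : GSetHom X Z₁) (g₁ : GSetHom Y Z₁) (f₂ : GSetHom X Z₂) (g₂ : GSetHom Y Z₂)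
    (h : ∀ a b, (f₁.toFun a = g₁.toFun b) ↔ (f₂.toFun a = g₂.toFun b)) (x : T.obj X) :
    T.tr (GSet.pbSnd f₁ g₁) (T.res (GSet.pbFst f₁ g₁) x)
      = T.tr (GSet.pbSnd f₂ g₂) (T.res (GSet.pbFst f₂ g₂) x) := by
  have hP : (fun q : X.carrier × Y.carrier => f₁.toFun q.1 = g₁.toFun q.2)
      = (fun q => f₂.toFun q.1 = g₂.toFun q.2) := funext fun q => propext (h q.1 q.2)
  show T.tr (pbSnd' X Y _ (pbPred_smul f₁ g₁)) (T.res (pbFst' X Y _ (pbPred_smul f₁ g₁)) x)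
      = T.tr (pbSnd' X Y _ (pbPred_smul f₂ g₂)) (T.res (pbFst' X Y _ (pbPred_smul f₂ g₂)) x)
  exact pb'_tr_congr T hP _ _ x

theorem pb_nm_eq (T : TambaraFunctor G) {X Y Z₁ Z₂ : GSet G}
    (f₁ : GSetHom X Z₁) (g₁ : GSetHom Y Z₁) (f₂ : GSetHom X Z₂) (g₂ : GSetHom Y Z₂)
    (h : ∀ a b, (f₁.toFun a = g₁.toFun b) ↔ (f₂.toFun a = g₂.toFun b)) (x : T.obj X) :
    T.nm (GSet.pbSnd f₁ g₁) (T.res (GSet.pbFst f₁ g₁) x)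
      = T.nm (GSet.pbSnd f₂ g₂) (T.res (GSet.pbFst f₂ g₂) x) := by
  have hP : (fun q : X.carrier × Y.carrier => f₁.toFun q.1 = g₁.toFun q.2)
      = (fun q => f₂.toFun q.1 = g₂.toFun q.2) := funext fun q => propext (h q.1 q.2)
  show T.nm (pbSnd' X Y _ (pbPred_smul f₁ g₁)) (T.res (pbFst' X Y _ (pbPred_smul f₁ g₁)) x)
      = T.nm (pbSnd' X Y _ (pbPred_smul f₂ g₂)) (T.res (pbFst' X Y _ (pbPred_smul f₂ g₂)) x)
  exact pb'_nm_congr T hP _ _ x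

/-- T of an empty-carrier G-set is trivial. -/
theorem obj_subsingleton (T : TambaraFunctor G) {W : GSet G} (hW : IsEmpty W.carrier)
    (a b : T.obj W) : a = b := by
  let e₁ : GSetHom (GSet.empty G) W := ⟨fun e => e.elim, fun g e => e.elim⟩
  let e₂ : GSetHom W (GSet.empty G) := ⟨fun w => (hW.false w).elim, fun g w => (hW.false w).elim⟩
  have hid : e₁.comp e₂ = GSetHom.id W := GSetHom.ext' (fun w => (hW.false w).elim)
  have key : ∀ x : T.obj W, x = T.res e₂ (T.res e₁ x) := by
    intro x
    rw [T.res_comp e₂ e₁ x, hid, T.res_id]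
  rw [key a, key b, T.empty_subsingleton (T.res e₁ a) (T.res e₁ b)]

theorem tr_of_empty (T : TambaraFunctor G) {W Z : GSet G} (hW : IsEmpty W.carrier)
    (f : GSetHom W Z) (a : T.obj W) : T.tr f a = 0 := by
  rw [obj_subsingleton T hW a 0, map_zero]

theorem nm_of_empty (T : TambaraFunctor G) {W Z : GSet G} (hW : IsEmpty W.carrier)
    (f : GSetHom W Z) (a : T.obj W) : T.nm f a = 1 := by
  rw [obj_subsingleton T hW a 1, map_one]

/-- Key lemma: restriction along an injective map splits its own transfer. -/
theorem res_tr_self (T : TambaraFunctor G) {A B : GSet G} (f : GSetHom A B)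
    (hf : Function.Injective f.toFun) (x : T.obj A) : T.res f (T.tr f x) = x := by
  rw [T.tr_bc f f x,
    pb_tr_eq T f f (GSetHom.id A) (GSetHom.id A)
      (fun a b => ⟨fun e => hf e, fun e => by cases e; rfl⟩) x,
    ← T.tr_bc (GSetHom.id A) (GSetHom.id A) x, T.res_id, T.tr_id]

theorem res_nm_self (T : TambaraFunctor G) {A B : GSet G} (f : GSetHom A B)
    (hf : Function.Injective f.toFun) (x : T.obj A) : T.res f (T.nm f x) = x := by
  rw [T.nm_bc f f x,
    pb_nm_eq T f f (GSetHom.id A) (GSetHom.id A)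
      (fun a b => ⟨fun e => hf e, fun e => by cases e; rfl⟩) x,
    ← T.nm_bc (GSetHom.id A) (GSetHom.id A) x, T.res_id, T.nm_id]

theorem res_tr_disj (T : TambaraFunctor G) {A B W : GSet G} (f : GSetHom A W)
    (g : GSetHom B W) (hd : ∀ a b, f.toFun a ≠ g.toFun b) (x : T.obj A) :
    T.res g (T.tr f x) = 0 := by
  rw [T.tr_bc f g x]
  exact tr_of_empty T (W := GSet.pullback f g) ⟨fun q => hd q.val.1 q.val.2 q.property⟩ _ _

theorem res_nm_disj (T : TambaraFunctor G) {A B W : GSet G} (f : GSetHom A W)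
    (g : GSetHom B W) (hd : ∀ a b, f.toFun a ≠ g.toFun b) (x : T.obj A) :
    T.res g (T.nm f x) = 1 := by
  rw [T.nm_bc f g x]
  exact nm_of_empty T (W := GSet.pullback f g) ⟨fun q => hd q.val.1 q.val.2 q.property⟩ _ _

/-- norm of zero along a surjective map is zero -/
theorem nm_zero_of_surj (T : TambaraFunctor G) {A B : GSet G} (f : GSetHom A B)
    (hf : Function.Surjective f.toFun) : T.nm f (0 : T.obj A) = 0 := by
  rw [T.nm_zero]
  have : IsEmpty (GSet.compl f).carrier := ⟨fun y => by
    obtain ⟨x, hx⟩ := hf y.val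
    exact y.property x hx⟩
  exact tr_of_empty T this _ _


/-! ### Parts (G-stable subsets) -/

def part (W : GSet G) (φ : W.carrier → Prop)
    (hφ : ∀ (g : G) w, φ w → φ (g • w)) : GSet G where
  carrier := { w : W.carrier // φ w }
  mulAction :=
  { smul := fun g w => ⟨g • w.val, hφ g w.val w.property⟩
    one_smul := fun w => Subtype.ext (one_smul G w.val)
    mul_smul := fun a b w => Subtype.ext (mul_smul a b w.val) }

def partIncl (W : GSet G) (φ : W.carrier → Prop)
    (hφ : ∀ (g : G) w, φ w → φ (g • w)) : GSetHom (part W φ hφ) W :=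
  ⟨Subtype.val, fun _ _ => rfl⟩

theorem not_inv {W : GSet G} {φ : W.carrier → Prop}
    (hφ : ∀ (g : G) w, φ w → φ (g • w)) :
    ∀ (g : G) w, ¬ φ w → ¬ φ (g • w) := by
  intro g w hw h
  exact hw (by simpa using hφ g⁻¹ _ h)

theorem partIncl_inj (W : GSet G) (φ : W.carrier → Prop) (hφ) :
    Function.Injective (partIncl W φ hφ).toFun := fun a b h => Subtype.ext h

theorem part_disj (W : GSet G) (φ : W.carrier → Prop) (hφ hφ') :
    ∀ (a : (part W φ hφ).carrier) (b : (part W (fun w => ¬ φ w) hφ').carrier),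
      (partIncl W φ hφ).toFun a ≠ (partIncl W (fun w => ¬ φ w) hφ').toFun b := by
  intro a b h
  have h' : a.val = b.val := h
  exact b.property (h' ▸ a.property)

/-- a map landing in a part factors through the part -/
def factorPart {V W : GSet G} (h : GSetHom V W) (φ : W.carrier → Prop)
    (hφ : ∀ (g : G) w, φ w → φ (g • w)) (hval : ∀ v, φ (h.toFun v)) :
    GSetHom V (part W φ hφ) :=
  ⟨fun v => ⟨h.toFun v, hval v⟩, fun g v => Subtype.ext (h.map_smul g v)⟩

theorem factorPart_spec {V W : GSet G} (h : GSetHom V W) (φ : W.carrier → Prop)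
    (hφ) (hval) : (partIncl W φ hφ).comp (factorPart h φ hφ hval) = h :=
  GSetHom.ext' fun _ => rfl

section Parts

variable (T : TambaraFunctor G) (W : GSet G) (φ : W.carrier → Prop)
  (hφ : ∀ (g : G) w, φ w → φ (g • w))

/-- injectivity of the pair of restrictions to the two parts -/
theorem res_part_inj {ξ η : T.obj W}
    (h1 : T.res (partIncl W φ hφ) ξ = T.res (partIncl W φ hφ) η)
    (h2 : T.res (partIncl W (fun w => ¬ φ w) (not_inv hφ)) ξ
        = T.res (partIncl W (fun w => ¬ φ w) (not_inv hφ)) η) : ξ = η := by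
  classical
  set PL := part W φ hφ with hPL
  set PR := part W (fun w => ¬ φ w) (not_inv hφ) with hPR
  let h : GSetHom (PL.sum PR) W :=
    ⟨Sum.elim Subtype.val Subtype.val, by rintro g (⟨w, hw⟩ | ⟨w, hw⟩) <;> rfl⟩
  let h' : GSetHom W (PL.sum PR) :=
    ⟨fun w => if hw : φ w then Sum.inl ⟨w, hw⟩ else Sum.inr ⟨w, hw⟩, by
      intro g w
      dsimp only
      by_cases hw : φ w
      · exact (dif_pos (hφ g w hw)).trans (congrArg (g • ·) (dif_pos hw : (if hw : φ w then Sum.inl ⟨w, hw⟩ else Sum.inr ⟨w, hw⟩ : (PL.sum PR).carrier) = Sum.inl ⟨w, hw⟩)).symm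
      · exact (dif_neg (not_inv hφ g w hw)).trans (congrArg (g • ·) (dif_neg hw : (if hw : φ w then Sum.inl ⟨w, hw⟩ else Sum.inr ⟨w, hw⟩ : (PL.sum PR).carrier) = Sum.inr ⟨w, hw⟩)).symm⟩
  have hcomp : h.comp h' = GSetHom.id W := GSetHom.ext' fun w => by
    by_cases hw : φ w
    · show h.toFun (h'.toFun w) = w
      show h.toFun (if hw : φ w then Sum.inl ⟨w, hw⟩ else Sum.inr ⟨w, hw⟩) = w
      exact congrArg h.toFun (dif_pos hw)
    · show h.toFun (h'.toFun w) = w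
      show h.toFun (if hw : φ w then Sum.inl ⟨w, hw⟩ else Sum.inr ⟨w, hw⟩) = w
      exact congrArg h.toFun (dif_neg hw)
  have hresinj : Function.Injective (T.res h) := fun s t hst => by
    have : T.res h' (T.res h s) = T.res h' (T.res h t) := by rw [hst]
    rwa [T.res_comp h' h, hcomp, T.res_id, T.res_comp h' h, hcomp, T.res_id] at this
  apply hresinj
  apply (T.add_bij PL PR).injective
  have e1 : h.comp (GSet.inl PL PR) = partIncl W φ hφ := GSetHom.ext' fun _ => rfl
  have e2 : h.comp (GSet.inr PL PR) = partIncl W (fun w => ¬ φ w) (not_inv hφ) :=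
    GSetHom.ext' fun _ => rfl
  show (T.res (GSet.inl PL PR) (T.res h ξ), T.res (GSet.inr PL PR) (T.res h ξ))
      = (T.res (GSet.inl PL PR) (T.res h η), T.res (GSet.inr PL PR) (T.res h η))
  rw [T.res_comp, T.res_comp, T.res_comp, T.res_comp, e1, e2, h1, h2]

/-- decomposition of an element along a partition -/
theorem part_decomp (w : T.obj W) :
    w = T.tr (partIncl W φ hφ) (T.res (partIncl W φ hφ) w)
      + T.tr (partIncl W (fun w => ¬ φ w) (not_inv hφ))
          (T.res (partIncl W (fun w => ¬ φ w) (not_inv hφ)) w) := by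
  apply res_part_inj T W φ hφ
  · rw [map_add, res_tr_self T _ (partIncl_inj W φ hφ),
      res_tr_disj T _ _ (fun a b h => part_disj W φ hφ (not_inv hφ) b a h.symm), add_zero]
  · rw [map_add, res_tr_self T _ (partIncl_inj W _ (not_inv hφ)),
      res_tr_disj T _ _ (part_disj W φ hφ (not_inv hφ)), zero_add]

/-- norm splits along a partition -/
theorem nm_part_split {Z : GSet G} (g : GSetHom W Z) (w : T.obj W) :
    T.nm g w = T.nm (g.comp (partIncl W φ hφ)) (T.res (partIncl W φ hφ) w)
      * T.nm (g.comp (partIncl W (fun w => ¬ φ w) (not_inv hφ)))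
          (T.res (partIncl W (fun w => ¬ φ w) (not_inv hφ)) w) := by
  have hw : w = T.nm (partIncl W φ hφ) (T.res (partIncl W φ hφ) w)
      * T.nm (partIncl W (fun w => ¬ φ w) (not_inv hφ))
          (T.res (partIncl W (fun w => ¬ φ w) (not_inv hφ)) w) := by
    apply res_part_inj T W φ hφ
    · rw [map_mul, res_nm_self T _ (partIncl_inj W φ hφ),
        res_nm_disj T _ _ (fun a b h => part_disj W φ hφ (not_inv hφ) b a h.symm), mul_one]
    · rw [map_mul, res_nm_self T _ (partIncl_inj W _ (not_inv hφ)),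
        res_nm_disj T _ _ (part_disj W φ hφ (not_inv hφ)), one_mul]
  conv_lhs => rw [hw]
  rw [map_mul, T.nm_comp, T.nm_comp]

end Parts

/-- transfer along an isomorphism inverts restriction -/
theorem tr_res_iso (T : TambaraFunctor G) {A B : GSet G} (u : GSetHom A B)
    (u' : GSetHom B A) (h1 : ∀ a, u'.toFun (u.toFun a) = a)
    (h2 : ∀ b, u.toFun (u'.toFun b) = b) (y : T.obj B) :
    T.tr u (T.res u y) = y := by
  have hinj : Function.Injective u.toFun := fun a b h => by
    have := congrArg u'.toFun h; rwa [h1, h1] at this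
  have hone : T.tr u (1 : T.obj A) = 1 := by
    have hri : Function.Injective (T.res u) := fun s t hst => by
      have : T.res u' (T.res u s) = T.res u' (T.res u t) := by rw [hst]
      rwa [T.res_comp, GSetHom.ext' (f := u.comp u') (g := GSetHom.id B) h2, T.res_id,
        T.res_comp, GSetHom.ext' (f := u.comp u') (g := GSetHom.id B) h2, T.res_id] at this
    apply hri
    rw [res_tr_self T u hinj, map_one]
  calc T.tr u (T.res u y) = T.tr u (1 * T.res u y) := by rw [one_mul]
    _ = T.tr u 1 * y := T.proj_formula u 1 y
    _ = y := by rw [hone, one_mul]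


theorem pull_inv {V W : GSet G} (h : GSetHom V W) (φ : W.carrier → Prop)
    (hφ : ∀ (g : G) w, φ w → φ (g • w)) :
    ∀ (g : G) v, φ (h.toFun v) → φ (h.toFun (g • v)) := by
  intro g v hv; rw [h.map_smul]; exact hφ g _ hv

/-! ### The fold map and the two summands of `X ⊔ X` -/

def fold (X : GSet G) : GSetHom (GSet.sum X X) X :=
  ⟨Sum.elim _root_.id _root_.id, by rintro g (x | x) <;> rfl⟩

def phiS (X : GSet G) : (GSet.sum X X).carrier → Prop := fun s => s.isLeft = true

theorem smul_isLeft (X : GSet G) (g : G) (s : (GSet.sum X X).carrier) :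
    (g • s).isLeft = s.isLeft := by cases s <;> rfl

theorem hphiS (X : GSet G) : ∀ (g : G) s, phiS X s → phiS X (g • s) := by
  intro g s hs
  show (g • s).isLeft = true
  rw [smul_isLeft]; exact hs

def SL (X : GSet G) : GSet G := part (GSet.sum X X) (phiS X) (hphiS X)
def SR (X : GSet G) : GSet G :=
  part (GSet.sum X X) (fun s => ¬ phiS X s) (not_inv (hphiS X))
def iL (X : GSet G) : GSetHom (SL X) (GSet.sum X X) := partIncl _ (phiS X) (hphiS X)
def iR (X : GSet G) : GSetHom (SR X) (GSet.sum X X) :=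
  partIncl _ (fun s => ¬ phiS X s) (not_inv (hphiS X))
def uL (X : GSet G) : GSetHom (SL X) X := (fold X).comp (iL X)
def uR (X : GSet G) : GSetHom (SR X) X := (fold X).comp (iR X)
def uL' (X : GSet G) : GSetHom X (SL X) :=
  ⟨fun x => ⟨Sum.inl x, rfl⟩, fun g x => Subtype.ext rfl⟩
def uR' (X : GSet G) : GSetHom X (SR X) :=
  ⟨fun x => ⟨Sum.inr x, by simp [phiS]⟩, fun g x => Subtype.ext rfl⟩

theorem uLinv1 (X : GSet G) : ∀ a, (uL' X).toFun ((uL X).toFun a) = a := by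
  rintro ⟨(x | x), pf⟩
  · rfl
  · exact absurd pf (by simp [phiS])
theorem uLinv2 (X : GSet G) : ∀ x, (uL X).toFun ((uL' X).toFun x) = x := fun _ => rfl
theorem uRinv1 (X : GSet G) : ∀ a, (uR' X).toFun ((uR X).toFun a) = a := by
  rintro ⟨(x | x), pf⟩
  · exact absurd (show phiS X (Sum.inl x) from rfl) pf
  · rfl
theorem uRinv2 (X : GSet G) : ∀ x, (uR X).toFun ((uR' X).toFun x) = x := fun _ => rfl

/-! ### The exponential object for `f` and the fold map -/

section PiPart
variable {X Y : GSet G}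

def phi0 (f : GSetHom X Y) : (GSet.piObj f (fold X)).carrier → Prop :=
  fun s => ∀ (x : X.carrier) (b : (GSet.sum X X).carrier),
    s.val.2 x = some b → b.isRight = true

theorem hphi0 (f : GSetHom X Y) : ∀ (g : G) s, phi0 f s → phi0 f (g • s) := by
  intro g s hs x b hb
  have hb' : (s.val.2 (g⁻¹ • x)).map (fun c => g • c) = some b := hb
  obtain ⟨b₀, h₀, rfl⟩ := Option.map_eq_some_iff.mp hb'
  have hr := hs _ _ h₀
  cases b₀ with
  | inl x' => simp at hr
  | inr x' => rfl

def i0 (f : GSetHom X Y) :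
    GSetHom (part (GSet.piObj f (fold X)) (phi0 f) (hphi0 f)) (GSet.piObj f (fold X)) :=
  partIncl _ (phi0 f) (hphi0 f)

def iP (f : GSetHom X Y) :
    GSetHom (part (GSet.piObj f (fold X)) (fun s => ¬ phi0 f s) (not_inv (hphi0 f)))
      (GSet.piObj f (fold X)) :=
  partIncl _ (fun s => ¬ phi0 f s) (not_inv (hphi0 f))

theorem eval_notLeft (f : GSetHom X Y) :
    ∀ v : (GSet.pullback (GSet.pbSnd f (GSet.piPr f (fold X))) (i0 f)).carrier,
      ¬ phiS X (((GSet.piEval f (fold X)).comp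
          (GSet.pbFst (GSet.pbSnd f (GSet.piPr f (fold X))) (i0 f))).toFun v) := by
  intro v hleft
  have hzs : v.val.1.val.2 = v.val.2.val := v.property
  have hphi : phi0 f v.val.1.val.2 := by rw [hzs]; exact v.val.2.property
  have hsome : v.val.1.val.2.val.2 v.val.1.val.1
      = some ((GSet.piEval f (fold X)).toFun v.val.1) := (Option.some_get _).symm
  have hright := hphi _ _ hsome
  have hleft' : ((GSet.piEval f (fold X)).toFun v.val.1).isLeft = true := hleft
  generalize (GSet.piEval f (fold X)).toFun v.val.1 = w at hleft' hright
  cases w with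
  | inl a => simp at hright
  | inr a => simp at hleft'

def theta0 (f : GSetHom X Y) :
    GSetHom (GSet.pullback (GSet.pbSnd f (GSet.piPr f (fold X))) (i0 f)) (SR X) :=
  factorPart ((GSet.piEval f (fold X)).comp
      (GSet.pbFst (GSet.pbSnd f (GSet.piPr f (fold X))) (i0 f)))
    (fun s => ¬ phiS X s) (not_inv (hphiS X)) (eval_notLeft f)

/-- the restriction of the norm to the all-right part only depends on the
right component of `c` -/
theorem main_term (T : TambaraFunctor G) (f : GSetHom X Y) (c : T.obj (GSet.sum X X)) :
    T.res (i0 f) (T.nm (GSet.pbSnd f (GSet.piPr f (fold X)))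
        (T.res (GSet.piEval f (fold X)) c))
      = T.nm (GSet.pbSnd (GSet.pbSnd f (GSet.piPr f (fold X))) (i0 f))
          (T.res (theta0 f) (T.res (iR X) c)) := by
  rw [T.nm_bc, T.res_comp,
    show (GSet.piEval f (fold X)).comp
        (GSet.pbFst (GSet.pbSnd f (GSet.piPr f (fold X))) (i0 f))
      = (iR X).comp (theta0 f) from
        (factorPart_spec _ (fun s => ¬ phiS X s) (not_inv (hphiS X)) (eval_notLeft f)).symm,
    ← T.res_comp]

def psiPred (f : GSetHom X Y) :
    (GSet.pullback (GSet.pbSnd f (GSet.piPr f (fold X))) (iP f)).carrier → Prop :=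
  fun v => phiS X (((GSet.piEval f (fold X)).comp
      (GSet.pbFst (GSet.pbSnd f (GSet.piPr f (fold X))) (iP f))).toFun v)

theorem hpsi (f : GSetHom X Y) : ∀ (g : G) v, psiPred f v → psiPred f (g • v) :=
  pull_inv _ (phiS X) (hphiS X)

def thetaPsi (f : GSetHom X Y) :
    GSetHom (part _ (psiPred f) (hpsi f)) (SL X) :=
  factorPart (((GSet.piEval f (fold X)).comp
      (GSet.pbFst (GSet.pbSnd f (GSet.piPr f (fold X))) (iP f))).comp
      (partIncl _ (psiPred f) (hpsi f)))
    (phiS X) (hphiS X) (fun w => w.property)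

theorem psi_surj (f : GSetHom X Y) :
    Function.Surjective (((GSet.pbSnd (GSet.pbSnd f (GSet.piPr f (fold X))) (iP f)).comp
      (partIncl _ (psiPred f) (hpsi f))).toFun) := by
  rintro ⟨s, hs⟩
  have hs2 : ∃ x b, s.val.2 x = some b ∧ ¬(b.isRight = true) := by
    by_contra hcon
    push_neg at hcon
    exact hs hcon
  obtain ⟨x, b, hb, hbr⟩ := hs2
  cases b with
  | inr x' => exact absurd rfl hbr
  | inl x' =>
    have hpb : x' = x := s.property.2 x (Sum.inl x') hb
    subst hpb
    have hfx : f.toFun x' = s.val.1 := (s.property.1 x').mp (by rw [hb]; rfl)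
    have hval : (GSet.piEval f (fold X)).toFun
        (⟨(x', s), hfx⟩ : (GSet.pullback f (GSet.piPr f (fold X))).carrier)
        = Sum.inl x' := GSet.optGet hb _
    refine ⟨⟨⟨(⟨(x', s), hfx⟩, ⟨s, hs⟩), rfl⟩, ?_⟩, rfl⟩
    show phiS X _
    have : (((GSet.piEval f (fold X)).comp
        (GSet.pbFst (GSet.pbSnd f (GSet.piPr f (fold X))) (iP f))).toFun
          ⟨(⟨(x', s), hfx⟩, ⟨s, hs⟩), rfl⟩) = Sum.inl x' := hval
    rw [show phiS X (((GSet.piEval f (fold X)).comp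
        (GSet.pbFst (GSet.pbSnd f (GSet.piPr f (fold X))) (iP f))).toFun
          ⟨(⟨(x', s), hfx⟩, ⟨s, hs⟩), rfl⟩) = (phiS X (Sum.inl x')) from by rw [this]]
    rfl

/-- the all-left-containing part contributes a term in the ideal -/
theorem plus_term (T : TambaraFunctor G) {K : ∀ Z : GSet G, Ideal (T.obj Z)}
    (hK : T.IsIdeal K) (f : GSetHom X Y) (c : T.obj (GSet.sum X X))
    (hc : T.res (iL X) c ∈ K (SL X)) :
    T.res (iP f) (T.nm (GSet.pbSnd f (GSet.piPr f (fold X)))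
        (T.res (GSet.piEval f (fold X)) c))
      ∈ K (part (GSet.piObj f (fold X)) (fun s => ¬ phi0 f s) (not_inv (hphi0 f))) := by
  rw [T.nm_bc, T.res_comp,
    nm_part_split T _ (psiPred f) (hpsi f) (GSet.pbSnd (GSet.pbSnd f (GSet.piPr f (fold X))) (iP f))]
  apply Ideal.mul_mem_right
  have harg : T.res (partIncl _ (psiPred f) (hpsi f))
      (T.res ((GSet.piEval f (fold X)).comp
        (GSet.pbFst (GSet.pbSnd f (GSet.piPr f (fold X))) (iP f))) c)
      = T.res (thetaPsi f) (T.res (iL X) c) := by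
    rw [T.res_comp,
      show ((GSet.piEval f (fold X)).comp
        (GSet.pbFst (GSet.pbSnd f (GSet.piPr f (fold X))) (iP f))).comp
          (partIncl _ (psiPred f) (hpsi f)) = (iL X).comp (thetaPsi f) from
        (factorPart_spec _ (phiS X) (hphiS X) _).symm,
      ← T.res_comp]
  rw [harg]
  have hmem : T.res (thetaPsi f) (T.res (iL X) c) ∈ K (part _ (psiPred f) (hpsi f)) :=
    hK.res_mem _ hc
  have h0 := nm_zero_of_surj T _ (psi_surj f)
  have hsh := hK.shriek_mem ((GSet.pbSnd (GSet.pbSnd f (GSet.piPr f (fold X))) (iP f)).comp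
      (partIncl _ (psiPred f) (hpsi f))) hmem
  unfold TambaraFunctor.shriek at hsh
  rwa [h0, sub_zero] at hsh

end PiPart


/-- Key Lemma: norms of sums modulo an ideal. -/
theorem KL (T : TambaraFunctor G) {K : ∀ Z : GSet G, Ideal (T.obj Z)} (hK : T.IsIdeal K)
    {X Y : GSet G} (f : GSetHom X Y) {u : T.obj X} (hu : u ∈ K X) (v : T.obj X) :
    T.nm f (u + v) - T.nm f v ∈ K Y := by
  set cU : T.obj (GSet.sum X X) := T.tr (iL X) (T.res (uL X) u) with hcU
  set cV : T.obj (GSet.sum X X) := T.tr (iR X) (T.res (uR X) v) with hcV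
  have htrU : T.tr (fold X) cU = u := by
    rw [hcU, T.tr_comp (iL X) (fold X)]
    exact tr_res_iso T (uL X) (uL' X) (uLinv1 X) (uLinv2 X) u
  have htrV : T.tr (fold X) cV = v := by
    rw [hcV, T.tr_comp (iR X) (fold X)]
    exact tr_res_iso T (uR X) (uR' X) (uRinv1 X) (uRinv2 X) v
  have hsum : T.tr (fold X) (cU + cV) = u + v := by rw [map_add, htrU, htrV]
  -- the two pieces of the distributivity formula
  set Phi : T.obj (GSet.sum X X) → T.obj (GSet.piObj f (fold X)) :=
    fun c => T.nm (GSet.pbSnd f (GSet.piPr f (fold X))) (T.res (GSet.piEval f (fold X)) c)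
    with hPhi
  set A : T.obj (GSet.sum X X) → T.obj Y :=
    fun c => T.tr ((GSet.piPr f (fold X)).comp (i0 f)) (T.res (i0 f) (Phi c)) with hA
  set B : T.obj (GSet.sum X X) → T.obj Y :=
    fun c => T.tr ((GSet.piPr f (fold X)).comp (iP f)) (T.res (iP f) (Phi c)) with hB
  have hsplit : ∀ c, T.tr (GSet.piPr f (fold X)) (Phi c) = A c + B c := by
    intro c
    conv_lhs => rw [part_decomp T _ (phi0 f) (hphi0 f) (Phi c)]
    rw [map_add, T.tr_comp, T.tr_comp]
    rfl
  -- restrictions of cU, cV to the two parts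
  have hrLU : T.res (iL X) cU = T.res (uL X) u :=
    res_tr_self T (iL X) (partIncl_inj _ _ _) _
  have hrRU : T.res (iR X) cU = 0 :=
    res_tr_disj T (iL X) (iR X) (part_disj _ (phiS X) (hphiS X) (not_inv (hphiS X))) _
  have hrLV : T.res (iL X) cV = 0 :=
    res_tr_disj T (iR X) (iL X)
      (fun a b h => part_disj _ (phiS X) (hphiS X) (not_inv (hphiS X)) b a h.symm) _
  have hrRV : T.res (iR X) cV = T.res (uR X) v :=
    res_tr_self T (iR X) (partIncl_inj _ _ _) _
  -- main terms agree
  have hAeq : A (cU + cV) = A cV := by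
    rw [hA]
    simp only
    rw [show (Phi (cU + cV)) = Phi (cU + cV) from rfl]
    rw [main_term T f (cU + cV), main_term T f cV]
    rw [map_add, hrRU, hrRV, zero_add]
  -- plus terms lie in the ideal
  have hBU : B (cU + cV) ∈ K Y := by
    apply hK.tr_mem
    apply plus_term T hK f
    rw [map_add, hrLU, hrLV, add_zero]
    exact hK.res_mem (uL X) hu
  have hBV : B cV ∈ K Y := by
    apply hK.tr_mem
    apply plus_term T hK f
    rw [hrLV]
    exact zero_mem _
  have e1 : T.nm f (u + v) = A (cU + cV) + B (cU + cV) := by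
    rw [← hsum, T.distrib, hsplit]
  have e2 : T.nm f v = A cV + B cV := by
    rw [← htrV, T.distrib, hsplit]
  rw [e1, e2, hAeq, show A cV + B (cU + cV) - (A cV + B cV) = B (cU + cV) - B cV by ring]
  exact sub_mem hBU hBV

end TamAux

/-- the levelwise sum of any family of ideals of `T` is an ideal; in
particular `f_•(𝔦(X) + 𝔧(X)) ⊆ f_•(0) + 𝔦(Y) + 𝔧(Y)`. -/
theorem sum_isIdeal (G : Type) [Group G] [Finite G] (T : TambaraFunctor G) :
    (∀ (ι : Type) (Is : ι → ∀ X : GSet G, Ideal (T.obj X)),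
      (∀ l : ι, T.IsIdeal (Is l)) → T.IsIdeal (fun X => ⨆ l : ι, Is l X)) ∧
    (∀ I J : ∀ X : GSet G, Ideal (T.obj X), T.IsIdeal I → T.IsIdeal J →
      ∀ {X Y : GSet G} (f : GSetHom X Y), ∀ x ∈ I X ⊔ J X,
        ∃ i ∈ I Y, ∃ j ∈ J Y, T.nm f x = T.nm f 0 + i + j) := by
  constructor
  · intro ι Is hIs
    refine ⟨?_, ?_, ?_⟩
    · intro X Y f y hy
      refine Submodule.iSup_induction (motive := fun y => T.res f y ∈ ⨆ l, Is l X)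
        (fun l => Is l Y) hy ?_ ?_ ?_
      · intro l z hz
        exact le_iSup (fun l => Is l X) l ((hIs l).res_mem f hz)
      · show T.res f 0 ∈ _
        rw [map_zero]; exact zero_mem _
      · intro a b ha hb
        show T.res f (a + b) ∈ _
        rw [map_add]; exact add_mem ha hb
    · intro X Y f x hx
      refine Submodule.iSup_induction (motive := fun x => T.tr f x ∈ ⨆ l, Is l Y)
        (fun l => Is l X) hx ?_ ?_ ?_
      · intro l z hz
        exact le_iSup (fun l => Is l Y) l ((hIs l).tr_mem f hz)
      · show T.tr f 0 ∈ _
        rw [map_zero]; exact zero_mem _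
      · intro a b ha hb
        show T.tr f (a + b) ∈ _
        rw [map_add]; exact add_mem ha hb
    · intro X Y f x hx
      have main : ∀ v : T.obj X, T.nm f (x + v) - T.nm f v ∈ ⨆ l, Is l Y := by
        refine Submodule.iSup_induction
          (motive := fun x => ∀ v : T.obj X, T.nm f (x + v) - T.nm f v ∈ ⨆ l, Is l Y)
          (fun l => Is l X) hx ?_ ?_ ?_
        · intro l z hz v
          exact le_iSup (fun l => Is l Y) l (TamAux.KL T (hIs l) f hz v)
        · intro v
          show T.nm f (0 + v) - T.nm f v ∈ _
          rw [zero_add, sub_self]; exact zero_mem _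
        · intro a b ha hb v
          have h1 := ha (b + v)
          have h2 := hb v
          have : T.nm f (a + b + v) - T.nm f v
              = (T.nm f (a + (b + v)) - T.nm f (b + v)) + (T.nm f (b + v) - T.nm f v) := by
            rw [add_assoc]; ring
          rw [this]
          exact add_mem h1 h2
      have := main 0
      rw [add_zero] at this
      exact this
  · intro I J hI hJ X Y f x hx
    obtain ⟨a, ha, b, hb, rfl⟩ := Submodule.mem_sup.mp hx
    have h1 : T.nm f (a + b) - T.nm f b ∈ I Y := TamAux.KL T hI f ha b
    have h2 : T.nm f (b + 0) - T.nm f 0 ∈ J Y := TamAux.KL T hJ f hb 0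
    rw [add_zero] at h2
    exact ⟨_, h1, _, h2, by ring⟩
end

section
/- Let T be a Tambara functor on a finite group G. If 𝔦, 𝔧 ⊆ T are coprime ideals (i.e., 𝔦 + 𝔧 = T), then 𝔦𝔧 = 𝔦 ∩ 𝔧, and in fact (𝔦𝔧)(X) = 𝔦(X)·𝔧(X) (the ordinary product of ideals in T(X)) for every finite G-set X. Consequently, if 𝔦_1, …, 𝔦_ℓ are pairwise coprime ideals of T, the projections induce an isomorphism of Tambara functors T/(𝔦_1⋯𝔦_ℓ) ≅ T/𝔦_1 × ⋯ × T/𝔦_ℓ. -/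
set_option autoImplicit false

-- auxiliary development, placed above the theorem
section Aux

namespace TambaraFunctor

variable {G : Type} [Group G] (T : TambaraFunctor G)

/-- Levelwise ideals closed under additive transfers. -/
def TrClosed (I : ∀ X : GSet G, Ideal (T.obj X)) : Prop :=
  ∀ {X Y : GSet G} (f : GSetHom X Y) {x : T.obj X}, x ∈ I X → T.tr f x ∈ I Y

theorem IsIdeal.trClosed {I : ∀ X : GSet G, Ideal (T.obj X)} (h : T.IsIdeal I) :
    T.TrClosed I := by intro X Y f x hx; exact h.tr_mem f hx

variable (I J : ∀ X : GSet G, Ideal (T.obj X))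

theorem mulSet_zero (X : GSet G) : (0 : T.obj X) ∈ T.mulSet I J X :=
  ⟨X, GSetHom.id X, 0, 0, zero_mem _, zero_mem _, by rw [T.tr_id, mul_zero]⟩

theorem mulSet_smul {X : GSet G} (c : T.obj X) {x : T.obj X} (hx : x ∈ T.mulSet I J X) :
    c * x ∈ T.mulSet I J X := by
  obtain ⟨A, p, a, b, ha, hb, rfl⟩ := hx
  refine ⟨A, p, a * T.res p c, b, Ideal.mul_mem_right _ _ ha, hb, ?_⟩
  have h := T.proj_formula p (a * b) c
  calc c * T.tr p (a * b) = T.tr p (a * b) * c := mul_comm _ _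
    _ = T.tr p (a * b * T.res p c) := h.symm
    _ = T.tr p (a * T.res p c * b) := by ring_nf

theorem mem_closure_of_mem_mulIdl {X : GSet G} {x : T.obj X} (hx : x ∈ T.mulIdl I J X) :
    x ∈ AddSubmonoid.closure (T.mulSet I J X) := by
  refine Submodule.span_induction ?_ ?_ ?_ ?_ hx
  · exact fun y hy => AddSubmonoid.subset_closure hy
  · exact zero_mem _
  · exact fun y z _ _ hy hz => add_mem hy hz
  · intro c y _ hy
    refine AddSubmonoid.closure_induction (fun s hs => AddSubmonoid.subset_closure
      (T.mulSet_smul I J c hs)) ?_ ?_ hy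
    · show c * 0 ∈ _; rw [mul_zero]; exact zero_mem _
    · intro y z _ _ hy' hz'
      show c * (y + z) ∈ _
      rw [mul_add]; exact add_mem hy' hz'

theorem trClosed_mulIdl : T.TrClosed (T.mulIdl I J) := by
  intro X Y f x hx
  have hx' := T.mem_closure_of_mem_mulIdl I J hx
  refine AddSubmonoid.closure_induction ?_ ?_ ?_ hx'
  · rintro s ⟨A, p, a, b, ha, hb, rfl⟩
    rw [T.tr_comp]
    exact Ideal.subset_span ⟨A, f.comp p, a, b, ha, hb, rfl⟩
  · rw [map_zero]; exact zero_mem _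
  · intro y z _ _ hy hz
    rw [map_add]; exact add_mem hy hz

theorem mulIdl_le_inf (hI : T.TrClosed I) (hJ : T.TrClosed J) (X : GSet G) :
    T.mulIdl I J X ≤ I X ⊓ J X := by
  refine Ideal.span_le.mpr ?_
  rintro x ⟨A, p, a, b, ha, hb, rfl⟩
  exact ⟨hI p (Ideal.mul_mem_right _ _ ha), hJ p (Ideal.mul_mem_left _ _ hb)⟩

theorem mul_le_mulIdl (X : GSet G) : I X * J X ≤ T.mulIdl I J X :=
  Ideal.mul_le.mpr fun a ha b hb =>
    Ideal.subset_span ⟨X, GSetHom.id X, a, b, ha, hb, (T.tr_id _).symm⟩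

theorem mulIdl_eq_mul (hI : T.TrClosed I) (hJ : T.TrClosed J) (X : GSet G)
    (hco : I X ⊔ J X = ⊤) : T.mulIdl I J X = I X * J X :=
  le_antisymm
    (by rw [Ideal.mul_eq_inf_of_coprime hco]; exact T.mulIdl_le_inf I J hI hJ X)
    (T.mul_le_mulIdl I J X)

theorem trClosed_mulMulti (L : List (∀ X : GSet G, Ideal (T.obj X))) :
    T.TrClosed (T.mulMulti L) := by
  cases L with
  | nil => intro X Y f x _; trivial
  | cons K L => exact T.trClosed_mulIdl K (T.mulMulti L)

theorem _root_.isCoprime_list_prod {R : Type} [CommSemiring R] {x : R} {L : List R}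
    (h : ∀ y ∈ L, IsCoprime x y) : IsCoprime x L.prod := by
  induction L with
  | nil => simpa using isCoprime_one_right
  | cons a L ih =>
    rw [List.prod_cons]
    exact (h a (by simp)).mul_right (ih fun y hy => h y (List.mem_cons_of_mem _ hy))

theorem mulMulti_eq_prod (L : List (∀ X : GSet G, Ideal (T.obj X)))
    (hTr : ∀ K ∈ L, T.TrClosed K)
    (hpw : L.Pairwise fun K K' => ∀ X : GSet G, K X ⊔ K' X = ⊤) (X : GSet G) :
    T.mulMulti L X = (L.map (fun K => K X)).prod := by
  induction L with
  | nil => simp [mulMulti, Ideal.one_eq_top]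
  | cons K L ih =>
    have hTr' : ∀ K' ∈ L, T.TrClosed K' := fun K' h => hTr K' (List.mem_cons_of_mem _ h)
    have ih := fun h => ih hTr' h
    have hpw' := (List.pairwise_cons.mp hpw).2
    have hhead := (List.pairwise_cons.mp hpw).1
    have hKprod : IsCoprime (K X) (T.mulMulti L X) := by
      rw [ih hpw']
      refine isCoprime_list_prod ?_
      intro y hy
      obtain ⟨K', hK', rfl⟩ := List.mem_map.mp hy
      exact Ideal.isCoprime_iff_sup_eq.mpr (hhead K' hK' X)
    show T.mulIdl K (T.mulMulti L) X = _
    rw [T.mulIdl_eq_mul K (T.mulMulti L) (hTr K (by simp)) (T.trClosed_mulMulti L) X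
      hKprod.sup_eq, ih hpw', List.map_cons, List.prod_cons]

end TambaraFunctor

/-- For pairwise coprime ideals, the product over `Fin ℓ` equals the infimum. -/
theorem fin_prod_eq_iInf {R : Type} [CommRing R] {n : ℕ} (f : Fin n → Ideal R)
    (h : Pairwise fun i j => IsCoprime (f i) (f j)) : ∏ i, f i = ⨅ i, f i := by
  have key : ∀ t : Finset (Fin n), ∏ i ∈ t, f i = ⨅ i ∈ t, f i := by
    intro t
    induction t using Finset.induction_on with
    | empty => simp
    | @insert a s hnotmem ih =>
      have hcop : IsCoprime (f a) (∏ i ∈ s, f i) :=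
        IsCoprime.prod_right fun i hi => h (fun e => hnotmem (e ▸ hi))
      rw [Finset.prod_insert hnotmem, Ideal.mul_eq_inf_of_coprime hcop.sup_eq, ih, Finset.iInf_insert]
  simpa using key Finset.univ


/-- for coprime ideals, the product equals the intersection and is computed
levelwise by the ordinary product of ideals; the Chinese remainder theorem holds for
pairwise coprime ideals. -/
theorem coprime_mul_and_crt (G : Type) [Group G] [Finite G] (T : TambaraFunctor G)
    (I J : ∀ X : GSet G, Ideal (T.obj X)) (hI : T.IsIdeal I) (hJ : T.IsIdeal J)
    (hco : ∀ X : GSet G, I X ⊔ J X = ⊤) :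
    (∀ X : GSet G, T.mulIdl I J X = I X * J X) ∧
    (∀ X : GSet G, T.mulIdl I J X = I X ⊓ J X) ∧
    (∀ (ℓ : ℕ) (Is : Fin ℓ → ∀ X : GSet G, Ideal (T.obj X)),
      (∀ i, T.IsIdeal (Is i)) →
      (Pairwise fun i j => ∀ X : GSet G, Is i X ⊔ Is j X = ⊤) →
      ∀ X : GSet G,
        ∃ e : (T.obj X ⧸ T.mulMulti (List.ofFn Is) X) ≃+* (∀ i, T.obj X ⧸ Is i X),
          ∀ x : T.obj X, e (Ideal.Quotient.mk _ x) = fun i => Ideal.Quotient.mk _ x) := by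
  have h1 : ∀ X : GSet G, T.mulIdl I J X = I X * J X := fun X =>
    T.mulIdl_eq_mul I J hI.trClosed hJ.trClosed X (hco X)
  refine ⟨h1, fun X => by rw [h1 X, Ideal.mul_eq_inf_of_coprime (hco X)], ?_⟩
  intro ℓ Is hIs hpair X
  have hcop : Pairwise fun i j => IsCoprime (Is i X) (Is j X) := fun i j hij =>
    Ideal.isCoprime_iff_sup_eq.mpr (hpair hij X)
  have heq : T.mulMulti (List.ofFn Is) X = ⨅ i, Is i X := by
    rw [T.mulMulti_eq_prod (List.ofFn Is)
      (fun K hK => by obtain ⟨i, rfl⟩ := List.mem_ofFn.mp hK; exact (hIs i).trClosed)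
      (List.pairwise_ofFn.mpr fun i j hij => hpair (Fin.ne_of_lt hij)) X,
      List.map_ofFn, ← fin_prod_eq_iInf _ hcop, ← List.prod_ofFn]
    rfl
  exact ⟨(Ideal.quotEquivOfEq heq).trans
      (Ideal.quotientInfRingEquivPiQuotient (fun i => Is i X) hcop),
    fun x => by
      simp only [RingEquiv.trans_apply, Ideal.quotEquivOfEq_mk]
      rfl⟩
end Aux
end
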